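/- arXiv:2605.19018 — 3 statements merged into one kernel-verified Lean document; each statement's English description precedes it below -/
import Mathlib

section
/- Let A, B be d_y×d_x real matrices with rank(A) ≤ r, and let Σ be a positive semidefinite d_x×d_x matrix with PSD square root Σ^{1/2}. Let B_r denote a best rank-r approximation of B. Then ‖(A−B)Σ^{1/2}‖_F² ≤ 8r(‖(A−B)Σ^{1/2}‖² + ‖(B−B_r)Σ^{1/2}‖²) + 2‖(B−B_r)Σ^{1/2}‖_F², where ‖·‖_F is the Frobenius norm and ‖·‖ the operator norm. -/
open Matrix

/-- Operator (spectral) norm of a real matrix. -/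
noncomputable def opNorm {m n : ℕ} (M : Matrix (Fin m) (Fin n) ℝ) : ℝ :=
  ‖LinearMap.toContinuousLinearMap (Matrix.toEuclideanLin M)‖

/-- Frobenius norm. -/
noncomputable def frobNorm {m n : ℕ} (M : Matrix (Fin m) (Fin n) ℝ) : ℝ :=
  Real.sqrt (∑ i, ∑ j, (M i j) ^ 2)

lemma frobNorm_nonneg {m n : ℕ} (M : Matrix (Fin m) (Fin n) ℝ) : 0 ≤ frobNorm M :=
  Real.sqrt_nonneg _

lemma frobNorm_neg {m n : ℕ} (M : Matrix (Fin m) (Fin n) ℝ) : frobNorm (-M) = frobNorm M := by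
  unfold frobNorm
  congr 1
  apply Finset.sum_congr rfl
  intro i _
  apply Finset.sum_congr rfl
  intro j _
  simp

lemma frobNorm_eq_norm {m n : ℕ} (M : Matrix (Fin m) (Fin n) ℝ) :
    frobNorm M = ‖(WithLp.equiv 2 ((Fin m × Fin n) → ℝ)).symm (fun p => M p.1 p.2)‖ := by
  rw [EuclideanSpace.norm_eq]
  simp [frobNorm, Fintype.sum_prod_type, Real.norm_eq_abs, sq_abs]

lemma frobNorm_triangle {m n : ℕ} (X Y : Matrix (Fin m) (Fin n) ℝ) :
    frobNorm (X + Y) ≤ frobNorm X + frobNorm Y := by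
  simp only [frobNorm_eq_norm]
  have : (WithLp.equiv 2 ((Fin m × Fin n) → ℝ)).symm (fun p => (X + Y) p.1 p.2)
      = (WithLp.equiv 2 ((Fin m × Fin n) → ℝ)).symm (fun p => X p.1 p.2)
        + (WithLp.equiv 2 ((Fin m × Fin n) → ℝ)).symm (fun p => Y p.1 p.2) := by
    rfl
  rw [this]
  exact norm_add_le _ _

lemma opNorm_nonneg {m n : ℕ} (M : Matrix (Fin m) (Fin n) ℝ) : 0 ≤ opNorm M :=
  norm_nonneg _

lemma opNorm_triangle {m n : ℕ} (X Y : Matrix (Fin m) (Fin n) ℝ) :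
    opNorm (X + Y) ≤ opNorm X + opNorm Y := by
  unfold opNorm
  rw [map_add]
  have : LinearMap.toContinuousLinearMap (toEuclideanLin X + toEuclideanLin Y)
      = LinearMap.toContinuousLinearMap (toEuclideanLin X)
        + LinearMap.toContinuousLinearMap (toEuclideanLin Y) := by
    ext v; rfl
  rw [this]
  exact norm_add_le _ _

lemma matrix_rank_neg {m n : ℕ} (M : Matrix (Fin m) (Fin n) ℝ) : (-M).rank = M.rank := by
  unfold Matrix.rank
  have : (-M).mulVecLin = -(M.mulVecLin) := LinearMap.ext fun v => by
    simp [mulVecLin_apply, neg_mulVec]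
  rw [this, LinearMap.range_neg]

lemma matrix_rank_add_le {m n : ℕ} (X Y : Matrix (Fin m) (Fin n) ℝ) :
    (X + Y).rank ≤ X.rank + Y.rank := by
  unfold Matrix.rank
  rw [mulVecLin_add]
  have h : LinearMap.range (X.mulVecLin + Y.mulVecLin) ≤
      LinearMap.range X.mulVecLin ⊔ LinearMap.range Y.mulVecLin := by
    rintro x ⟨v, rfl⟩
    exact Submodule.mem_sup.mpr ⟨_, ⟨v, rfl⟩, _, ⟨v, rfl⟩, rfl⟩
  exact (Submodule.finrank_mono h).trans
    (Submodule.finrank_add_le_finrank_add_finrank _ _)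

lemma frob_sq_le_rank_mul_opNorm_sq {m n : ℕ} (M : Matrix (Fin m) (Fin n) ℝ) :
    frobNorm M ^ 2 ≤ M.rank * opNorm M ^ 2 := by
  classical
  set G : Matrix (Fin n) (Fin n) ℝ := Mᴴ * M with hGdef
  have hPSD : G.PosSemidef := posSemidef_conjTranspose_mul_self M
  have hG : G.IsHermitian := hPSD.isHermitian
  -- frobNorm squared equals trace of G
  have h1 : frobNorm M ^ 2 = G.trace := by
    rw [frobNorm, Real.sq_sqrt (by positivity)]
    simp only [hGdef, Matrix.trace, Matrix.diag, Matrix.mul_apply, conjTranspose_apply,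
      star_trivial]
    rw [Finset.sum_comm]
    simp [sq]
  -- trace of G equals sum of eigenvalues
  have h2 : G.trace = ∑ i, hG.eigenvalues i := by
    conv_lhs => rw [hG.spectral_theorem]
    rw [Unitary.conjStarAlgAut_apply, Matrix.trace_mul_cycle]
    rw [(Matrix.mem_unitaryGroup_iff').mp (hG.eigenvectorUnitary).2, one_mul, trace_diagonal]
    simp
  -- each eigenvalue is at most opNorm M ^ 2
  have h3 : ∀ i, hG.eigenvalues i ≤ opNorm M ^ 2 := by
    intro i
    set v : EuclideanSpace ℝ (Fin n) := hG.eigenvectorBasis i with hv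
    have hnv : ‖v‖ = 1 := hG.eigenvectorBasis.orthonormal.1 i
    have he : hG.eigenvalues i = ⇑v ⬝ᵥ (G *ᵥ ⇑v) := by
      have := hG.eigenvalues_eq i
      simpa [star_trivial] using this
    have hdot : ⇑v ⬝ᵥ (G *ᵥ ⇑v) = (M *ᵥ ⇑v) ⬝ᵥ (M *ᵥ ⇑v) := by
      rw [hGdef, ← mulVec_mulVec, dotProduct_mulVec]
      congr 1
      rw [show (Mᴴ : Matrix (Fin n) (Fin m) ℝ) = Mᵀ from by ext i j; simp,
        vecMul_transpose]
    have hnorm : (M *ᵥ ⇑v) ⬝ᵥ (M *ᵥ ⇑v)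
        = ‖(LinearMap.toContinuousLinearMap (toEuclideanLin M)) v‖ ^ 2 := by
      have hfun : ((LinearMap.toContinuousLinearMap (toEuclideanLin M)) v : Fin m → ℝ)
          = M *ᵥ ⇑v := rfl
      rw [EuclideanSpace.norm_eq, Real.sq_sqrt (by positivity)]
      simp [hfun, dotProduct, Real.norm_eq_abs, sq_abs, sq]
    have hle : ‖(LinearMap.toContinuousLinearMap (toEuclideanLin M)) v‖ ≤ opNorm M := by
      have := (LinearMap.toContinuousLinearMap (toEuclideanLin M)).le_opNorm v
      rwa [hnv, mul_one] at this
    calc hG.eigenvalues i = ‖(LinearMap.toContinuousLinearMap (toEuclideanLin M)) v‖ ^ 2 := by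
          rw [he, hdot, hnorm]
      _ ≤ opNorm M ^ 2 := by
          have h0 : (0:ℝ) ≤ ‖(LinearMap.toContinuousLinearMap (toEuclideanLin M)) v‖ :=
            norm_nonneg _
          nlinarith [hle]
  -- sum of eigenvalues bounded by rank times opNorm squared
  have h4 : ∑ i, hG.eigenvalues i ≤ (M.rank : ℝ) * opNorm M ^ 2 := by
    have hrank : M.rank = Fintype.card {i // hG.eigenvalues i ≠ 0} := by
      rw [← rank_conjTranspose_mul_self M]
      exact hG.rank_eq_card_non_zero_eigs
    have hsum : ∑ i, hG.eigenvalues i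
        = ∑ i ∈ Finset.univ.filter (fun i => hG.eigenvalues i ≠ 0), hG.eigenvalues i := by
      rw [Finset.sum_filter_ne_zero]
    have hcard : (Finset.univ.filter (fun i => hG.eigenvalues i ≠ 0)).card
        = Fintype.card {i // hG.eigenvalues i ≠ 0} := (Fintype.card_subtype _).symm
    rw [hsum, hrank, ← hcard]
    have := Finset.sum_le_card_nsmul (Finset.univ.filter (fun i => hG.eigenvalues i ≠ 0))
      hG.eigenvalues (opNorm M ^ 2) (fun i _ => h3 i)
    simpa [nsmul_eq_mul] using this
  rw [h1, h2]
  exact h4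

/-- Decomposition bound for low-rank matrices: if `rank A ≤ r` and `Br` is a best
rank-`r` approximation of `B` (in Frobenius norm, i.e. an SVD truncation), then for any
PSD square root `S` of a PSD matrix `Σ`,
`‖(A−B)S‖_F² ≤ 8r(‖(A−B)S‖² + ‖(B−Br)S‖²) + 2‖(B−Br)S‖_F²`. -/
theorem lowrank_decomposition {dy dx : ℕ} (r : ℕ)
    (A B Br : Matrix (Fin dy) (Fin dx) ℝ) (Sig S : Matrix (Fin dx) (Fin dx) ℝ)
    (hSig : Sig.PosSemidef) (hS : S.PosSemidef) (hSS : S * S = Sig)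
    (hA : A.rank ≤ r)
    (hBr_rank : Br.rank ≤ r)
    (hBr_best : ∀ C : Matrix (Fin dy) (Fin dx) ℝ, C.rank ≤ r →
      frobNorm (B - Br) ≤ frobNorm (B - C)) :
    frobNorm ((A - B) * S) ^ 2 ≤
      8 * r * (opNorm ((A - B) * S) ^ 2 + opNorm ((B - Br) * S) ^ 2) +
        2 * frobNorm ((B - Br) * S) ^ 2 := by
  set X := (A - B) * S with hXdef
  set D := (B - Br) * S with hDdef
  set E := (A - Br) * S with hEdef
  -- E = X + D
  have hE : E = X + D := by
    rw [hEdef, hXdef, hDdef, ← Matrix.add_mul, sub_add_sub_cancel]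
  -- rank of E is at most 2r
  have hrankE : ((A - Br) * S).rank ≤ 2 * r := by
    calc ((A - Br) * S).rank ≤ (A - Br).rank := rank_mul_le_left _ _
      _ = (A + (-Br)).rank := by rw [sub_eq_add_neg]
      _ ≤ A.rank + (-Br).rank := matrix_rank_add_le _ _
      _ = A.rank + Br.rank := by rw [matrix_rank_neg]
      _ ≤ r + r := add_le_add hA hBr_rank
      _ = 2 * r := (two_mul r).symm
  -- Frobenius bound on E via rank
  have hfrobE : frobNorm E ^ 2 ≤ (2 * r : ℝ) * opNorm E ^ 2 := by
    refine (frob_sq_le_rank_mul_opNorm_sq E).trans ?_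
    have hcast : (((A - Br) * S).rank : ℝ) ≤ (2 * r : ℝ) := by
      exact_mod_cast hrankE
    have h0 : (0:ℝ) ≤ opNorm E ^ 2 := sq_nonneg _
    calc (E.rank : ℝ) * opNorm E ^ 2 ≤ (2 * r : ℝ) * opNorm E ^ 2 := by
          apply mul_le_mul_of_nonneg_right _ h0
          exact_mod_cast hrankE
      _ = (2 * r : ℝ) * opNorm E ^ 2 := rfl
  -- triangle inequalities
  have htriX : frobNorm X ≤ frobNorm E + frobNorm D := by
    have : X = E + (-D) := by rw [hE]; abel
    calc frobNorm X = frobNorm (E + (-D)) := by rw [this]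
      _ ≤ frobNorm E + frobNorm (-D) := frobNorm_triangle _ _
      _ = frobNorm E + frobNorm D := by rw [frobNorm_neg]
  have htriE : opNorm E ≤ opNorm X + opNorm D := hE ▸ opNorm_triangle X D
  -- put it together numerically
  have h0X : 0 ≤ frobNorm X := frobNorm_nonneg _
  have h0E : 0 ≤ frobNorm E := frobNorm_nonneg _
  have h0D : 0 ≤ frobNorm D := frobNorm_nonneg _
  have o0X : 0 ≤ opNorm X := opNorm_nonneg _
  have o0E : 0 ≤ opNorm E := opNorm_nonneg _
  have o0D : 0 ≤ opNorm D := opNorm_nonneg _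
  have hr0 : (0:ℝ) ≤ (r:ℝ) := Nat.cast_nonneg r
  nlinarith [sq_nonneg (frobNorm E - frobNorm D), sq_nonneg (opNorm X - opNorm D),
    mul_le_mul_of_nonneg_left (sq_nonneg (opNorm X - opNorm D)) hr0,
    mul_le_mul htriE htriE o0E (by linarith : (0:ℝ) ≤ opNorm X + opNorm D),
    mul_le_mul htriX htriX h0X (by linarith : (0:ℝ) ≤ frobNorm E + frobNorm D),
    hfrobE]
end

section
/- Let X ∈ ℝ^{d_x×n} with rank(X) = min{n, d_x}, let Σ̂ = (1/n)XXᵀ, and let Δ̂_FFT ∈ ℝ^{d_y×d_x}. Suppose r ≤ rank(Δ̂_FFT Σ̂^{1/2}) and σ_r(Δ̂_FFT Σ̂^{1/2}) > σ_{r+1}(Δ̂_FFT Σ̂^{1/2}). Then Δ̂_LoRA := [Δ̂_FFT Σ̂^{1/2}]_r (Σ̂^{1/2})⁺ is a minimizer of ‖ΔX − Δ̂_FFT X‖_F² over all matrices Δ of rank at most r, and among all such minimizers it has minimal Frobenius norm. -/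
open Matrix

/-- `sval M k` is the `k`-th largest singular value of `M` (1-indexed), via the
approximation-number characterization `σ_k(M) = inf {‖M - B‖ : rank B < k}`. -/
noncomputable def sval {m n : ℕ} (M : Matrix (Fin m) (Fin n) ℝ) (k : ℕ) : ℝ :=
  sInf ((fun B => opNorm (M - B)) '' {B | B.rank < k})

namespace LoraAux


noncomputable def fsq {m n : ℕ} (M : Matrix (Fin m) (Fin n) ℝ) : ℝ := Matrix.trace (Mᵀ * M)

noncomputable def finner {m n : ℕ} (M N : Matrix (Fin m) (Fin n) ℝ) : ℝ := Matrix.trace (Mᵀ * N)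

lemma fsq_eq_sum {m n : ℕ} (M : Matrix (Fin m) (Fin n) ℝ) :
    fsq M = ∑ i, ∑ j, (M i j) ^ 2 := by
  rw [fsq, Matrix.trace]
  simp only [Matrix.diag, Matrix.mul_apply, Matrix.transpose_apply]
  rw [Finset.sum_comm]
  simp [sq]

lemma fsq_nonneg {m n : ℕ} (M : Matrix (Fin m) (Fin n) ℝ) : 0 ≤ fsq M := by
  rw [fsq_eq_sum]; positivity

lemma eq_zero_of_fsq_eq_zero {m n : ℕ} {M : Matrix (Fin m) (Fin n) ℝ} (h : fsq M = 0) :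
    M = 0 := by
  rw [fsq_eq_sum] at h
  ext i j
  have h1 : ∀ i ∈ Finset.univ, (0:ℝ) ≤ ∑ j, (M i j) ^ 2 := by intros; positivity
  have h2 := (Finset.sum_eq_zero_iff_of_nonneg h1).mp h i (Finset.mem_univ i)
  have h3 : ∀ j ∈ Finset.univ, (0:ℝ) ≤ (M i j)^2 := by intros; positivity
  have := (Finset.sum_eq_zero_iff_of_nonneg h3).mp h2 j (Finset.mem_univ j)
  simpa [pow_eq_zero_iff] using this

lemma frobNorm_eq {m n : ℕ} (M : Matrix (Fin m) (Fin n) ℝ) :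
    frobNorm M = Real.sqrt (fsq M) := by rw [frobNorm, fsq_eq_sum]

lemma frobNorm_le_frobNorm {m n : ℕ} {M N : Matrix (Fin m) (Fin n) ℝ}
    (h : fsq M ≤ fsq N) : frobNorm M ≤ frobNorm N := by
  rw [frobNorm_eq, frobNorm_eq]; exact Real.sqrt_le_sqrt h

lemma fsq_le_of_frobNorm_le {m n : ℕ} {M N : Matrix (Fin m) (Fin n) ℝ}
    (h : frobNorm M ≤ frobNorm N) : fsq M ≤ fsq N := by
  rw [frobNorm_eq, frobNorm_eq] at h
  have h1 := fsq_nonneg M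
  have h2 := fsq_nonneg N
  nlinarith [Real.sq_sqrt h1, Real.sq_sqrt h2, Real.sqrt_nonneg (fsq M), Real.sqrt_nonneg (fsq N)]

lemma finner_comm {m n : ℕ} (M N : Matrix (Fin m) (Fin n) ℝ) : finner M N = finner N M := by
  rw [finner, finner, ← Matrix.trace_transpose, Matrix.transpose_mul, Matrix.transpose_transpose]

lemma fsq_add_expand {m n : ℕ} (M N : Matrix (Fin m) (Fin n) ℝ) :
    fsq (M + N) = fsq M + 2 * finner M N + fsq N := by
  rw [fsq, finner, fsq, fsq, Matrix.transpose_add, Matrix.add_mul, Matrix.mul_add, Matrix.mul_add,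
    Matrix.trace_add, Matrix.trace_add, Matrix.trace_add]
  have : Matrix.trace (Nᵀ * M) = Matrix.trace (Mᵀ * N) := by
    rw [← Matrix.trace_transpose, Matrix.transpose_mul, Matrix.transpose_transpose]
  rw [this]; ring

lemma fsq_sub_expand {m n : ℕ} (M N : Matrix (Fin m) (Fin n) ℝ) :
    fsq (M - N) = fsq M - 2 * finner M N + fsq N := by
  have := fsq_add_expand M (-N)
  simp only [← sub_eq_add_neg] at this
  rw [this]
  have h1 : fsq (-N) = fsq N := by rw [fsq, fsq]; simp
  have h2 : finner M (-N) = - finner M N := by rw [finner, finner]; simp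
  rw [h1, h2]; ring

lemma fsq_sub_comm {m n : ℕ} (M N : Matrix (Fin m) (Fin n) ℝ) :
    fsq (M - N) = fsq (N - M) := by
  rw [fsq_sub_expand, fsq_sub_expand, finner_comm]
  ring

lemma finner_cross {m n : ℕ} (J : Matrix (Fin n) (Fin n) ℝ) (hJt : Jᵀ = J) (hJi : J * J = J)
    (M N : Matrix (Fin m) (Fin n) ℝ) : finner (M - M * J) (N * J) = 0 := by
  rw [finner, Matrix.transpose_sub, Matrix.sub_mul, Matrix.trace_sub, Matrix.transpose_mul, hJt]
  have h2 : Matrix.trace (J * (Mᵀ * (N * J))) = Matrix.trace (Mᵀ * (N * J) * J) :=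
    Matrix.trace_mul_comm J (Mᵀ * (N * J))
  rw [Matrix.mul_assoc, h2]
  have : Mᵀ * (N * J) * J = Mᵀ * (N * J) := by
    rw [Matrix.mul_assoc, Matrix.mul_assoc, hJi]
  rw [this, sub_self]

lemma fsq_pyth {m n : ℕ} (J : Matrix (Fin n) (Fin n) ℝ) (hJt : Jᵀ = J) (hJi : J * J = J)
    (M : Matrix (Fin m) (Fin n) ℝ) : fsq M = fsq (M * J) + fsq (M - M * J) := by
  have hd : M = M * J + (M - M * J) := by abel
  nth_rewrite 1 [hd]
  rw [fsq_add_expand]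
  have : finner (M * J) (M - M * J) = 0 := by
    rw [finner_comm]
    exact finner_cross J hJt hJi M M
  rw [this]; ring

lemma fsq_mul_le {m n : ℕ} (J : Matrix (Fin n) (Fin n) ℝ) (hJt : Jᵀ = J) (hJi : J * J = J)
    (M : Matrix (Fin m) (Fin n) ℝ) : fsq (M * J) ≤ fsq M := by
  rw [fsq_pyth J hJt hJi M]
  have := fsq_nonneg (M - M * J)
  linarith

lemma diag_mtm {m p : ℕ} (M : Matrix (Fin m) (Fin p) ℝ) (k : Fin p) :
    (Mᵀ * M) k k = ∑ i, (M i k) ^ 2 := by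
  simp [Matrix.mul_apply, sq]

lemma col_eq_zero {m p : ℕ} {M : Matrix (Fin m) (Fin p) ℝ} {k : Fin p}
    (h : (Mᵀ * M) k k = 0) : ∀ i, M i k = 0 := by
  rw [diag_mtm] at h
  intro i
  have h3 : ∀ i ∈ Finset.univ, (0:ℝ) ≤ (M i k)^2 := by intros; positivity
  have := (Finset.sum_eq_zero_iff_of_nonneg h3).mp h i (Finset.mem_univ i)
  simpa [pow_eq_zero_iff] using this

lemma trace_diagonal_mul {p : ℕ} (d : Fin p → ℝ) (M : Matrix (Fin p) (Fin p) ℝ) :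
    Matrix.trace (Matrix.diagonal d * M) = ∑ k, d k * M k k := by
  rw [Matrix.trace]
  simp [Matrix.diag, Matrix.diagonal_mul]



lemma spectral_sorted {d : ℕ} (G : Matrix (Fin d) (Fin d) ℝ) (hG : G.PosSemidef) :
    ∃ (U : Matrix (Fin d) (Fin d) ℝ) (μ : Fin d → ℝ),
      U * Uᵀ = 1 ∧ Uᵀ * U = 1 ∧ G = U * Matrix.diagonal μ * Uᵀ ∧ Antitone μ ∧ ∀ k, 0 ≤ μ k := by
  have hH : G.IsHermitian := hG.1
  set U₀ : Matrix (Fin d) (Fin d) ℝ := (Matrix.IsHermitian.eigenvectorUnitary hH : Matrix (Fin d) (Fin d) ℝ) with hU₀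
  have hstar : star U₀ = U₀ᵀ := by
    rw [Matrix.star_eq_conjTranspose, Matrix.conjTranspose_eq_transpose_of_trivial]
  have hU₀1 : U₀ * U₀ᵀ = 1 := by
    rw [← hstar]; exact (Matrix.mem_unitaryGroup_iff).mp (Matrix.IsHermitian.eigenvectorUnitary hH).2
  have hU₀2 : U₀ᵀ * U₀ = 1 := by
    rw [← hstar]; exact (Matrix.mem_unitaryGroup_iff').mp (Matrix.IsHermitian.eigenvectorUnitary hH).2
  have hspec : G = U₀ * Matrix.diagonal hH.eigenvalues * U₀ᵀ := by
    have := Matrix.IsHermitian.spectral_theorem hH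
    rw [← hstar]
    exact this.trans rfl
  obtain ⟨π, hπ⟩ : ∃ π : Equiv.Perm (Fin d), Monotone ((fun k => - hH.eigenvalues k) ∘ π) :=
    ⟨Tuple.sort (fun k => - hH.eigenvalues k), Tuple.monotone_sort _⟩
  refine ⟨U₀.submatrix id π, hH.eigenvalues ∘ π, ?_, ?_, ?_, ?_, ?_⟩
  · rw [Matrix.transpose_submatrix, Matrix.submatrix_mul_equiv, hU₀1, Matrix.submatrix_id_id]
  · rw [Matrix.transpose_submatrix,
      ← Matrix.submatrix_mul U₀ᵀ U₀ (π : Fin d → Fin d) id (π : Fin d → Fin d)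
        Function.bijective_id, hU₀2, Matrix.submatrix_one_equiv]
  · have hdiag : Matrix.diagonal (hH.eigenvalues ∘ π) = (Matrix.diagonal hH.eigenvalues).submatrix π π :=
      (Matrix.submatrix_diagonal_equiv hH.eigenvalues π).symm
    rw [hdiag, Matrix.transpose_submatrix, Matrix.submatrix_mul_equiv,
      Matrix.submatrix_mul_equiv, Matrix.submatrix_id_id]
    exact hspec
  · intro i j hij
    have := hπ hij
    simpa using this
  · intro k
    exact hG.eigenvalues_nonneg _


lemma col_eq_zero' {m p : ℕ} {M : Matrix (Fin m) (Fin p) ℝ} {k : Fin p}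
    (h : (Mᵀ * M) k k = 0) : ∀ i, M i k = 0 := by
  have hd : (Mᵀ * M) k k = ∑ i, (M i k)^2 := by
    rw [Matrix.mul_apply]
    exact Finset.sum_congr rfl fun i _ => by rw [Matrix.transpose_apply, sq]
  rw [hd] at h
  intro i
  have h3 : ∀ i ∈ Finset.univ, (0:ℝ) ≤ (M i k)^2 := by intros; positivity
  have := (Finset.sum_eq_zero_iff_of_nonneg h3).mp h i (Finset.mem_univ i)
  simpa [pow_eq_zero_iff] using this

lemma exists_proj {dy dx : ℕ} (B : Matrix (Fin dy) (Fin dx) ℝ) :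
    ∃ Pm : Matrix (Fin dx) (Fin dx) ℝ, Pmᵀ = Pm ∧ Pm * Pm = Pm ∧ B * Pm = B ∧
      Matrix.trace Pm = (B.rank : ℝ) := by
  have hPSD : (Bᵀ * B).PosSemidef := by
    have := Matrix.posSemidef_conjTranspose_mul_self B
    rwa [Matrix.conjTranspose_eq_transpose_of_trivial] at this
  have hH : (Bᵀ * B).IsHermitian := hPSD.1
  set V : Matrix (Fin dx) (Fin dx) ℝ := (Matrix.IsHermitian.eigenvectorUnitary hH : Matrix (Fin dx) (Fin dx) ℝ) with hV
  have hstar : star V = Vᵀ := by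
    rw [Matrix.star_eq_conjTranspose, Matrix.conjTranspose_eq_transpose_of_trivial]
  have hV1 : V * Vᵀ = 1 := by
    rw [← hstar]; exact (Matrix.mem_unitaryGroup_iff).mp (Matrix.IsHermitian.eigenvectorUnitary hH).2
  have hV2 : Vᵀ * V = 1 := by
    rw [← hstar]; exact (Matrix.mem_unitaryGroup_iff').mp (Matrix.IsHermitian.eigenvectorUnitary hH).2
  have hspec : Bᵀ * B = V * Matrix.diagonal hH.eigenvalues * Vᵀ := by
    have := Matrix.IsHermitian.spectral_theorem hH
    rw [← hstar]
    exact this.trans rfl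
  set e : Fin dx → ℝ := fun k => if hH.eigenvalues k = 0 then 0 else 1 with he
  set E : Matrix (Fin dx) (Fin dx) ℝ := Matrix.diagonal e with hE
  refine ⟨V * E * Vᵀ, ?_, ?_, ?_, ?_⟩
  · rw [Matrix.transpose_mul, Matrix.transpose_mul, Matrix.transpose_transpose,
      Matrix.diagonal_transpose, Matrix.mul_assoc]
  · have hee : ∀ k, e k * e k = e k := fun k => by
      by_cases h : hH.eigenvalues k = 0 <;> simp [he, h]
    have hEE : E * E = E := by
      rw [hE, Matrix.diagonal_mul_diagonal]
      exact congrArg Matrix.diagonal (funext hee)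
    calc V * E * Vᵀ * (V * E * Vᵀ)
        = V * (E * (Vᵀ * (V * (E * Vᵀ)))) := by simp only [Matrix.mul_assoc]
      _ = V * (E * (E * Vᵀ)) := by rw [← Matrix.mul_assoc Vᵀ V (E * Vᵀ), hV2, Matrix.one_mul]
      _ = V * (E * E * Vᵀ) := by rw [Matrix.mul_assoc E E Vᵀ]
      _ = V * (E * Vᵀ) := by rw [hEE]
      _ = V * E * Vᵀ := by rw [← Matrix.mul_assoc]
  · -- B * (V * E * Vᵀ) = B
    have hBVE : B * V * E = B * V := by
      have hcol : (B * V)ᵀ * (B * V) = Matrix.diagonal hH.eigenvalues := by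
        calc (B * V)ᵀ * (B * V) = Vᵀ * (Bᵀ * B) * V := by
              rw [Matrix.transpose_mul]; simp only [Matrix.mul_assoc]
        _ = Vᵀ * (V * Matrix.diagonal hH.eigenvalues * Vᵀ) * V :=
              congrArg (fun M => Vᵀ * M * V) hspec
        _ = (Vᵀ * V) * Matrix.diagonal hH.eigenvalues * (Vᵀ * V) := by
              simp only [Matrix.mul_assoc]
        _ = Matrix.diagonal hH.eigenvalues := by rw [hV2, Matrix.one_mul, Matrix.mul_one]
      ext i k
      rw [hE, Matrix.mul_diagonal]
      by_cases h : hH.eigenvalues k = 0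
      · have hzero : ((B * V)ᵀ * (B * V)) k k = 0 := by rw [hcol, Matrix.diagonal_apply_eq, h]
        rw [col_eq_zero' hzero i, zero_mul]
      · have h1 : e k = 1 := by simp [he, h]
        rw [h1, mul_one]
    calc B * (V * E * Vᵀ) = B * V * E * Vᵀ := by simp only [Matrix.mul_assoc]
      _ = B * V * Vᵀ := by rw [hBVE]
      _ = B := by rw [Matrix.mul_assoc, hV1, Matrix.mul_one]
  · have h1 : Matrix.trace (V * E * Vᵀ) = Matrix.trace E := by
      rw [Matrix.trace_mul_comm (V * E) Vᵀ, ← Matrix.mul_assoc, hV2, Matrix.one_mul]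
    rw [h1]
    have h2 : Matrix.trace E = ∑ k, e k := by
      rw [hE, Matrix.trace_diagonal]
    have h3 : ∑ k, e k = ((Finset.univ.filter (fun k => hH.eigenvalues k ≠ 0)).card : ℝ) := by
      rw [he, Finset.card_filter]
      push_cast
      exact Finset.sum_congr rfl fun k _ => by by_cases h : hH.eigenvalues k = 0 <;> simp [h]
    have h4 : B.rank = Fintype.card {k // hH.eigenvalues k ≠ 0} := by
      rw [← Matrix.rank_transpose_mul_self B]
      exact Matrix.IsHermitian.rank_eq_card_non_zero_eigs hH
    rw [h2, h3, h4, Fintype.card_subtype]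

lemma exists_kernel_vec {m p : ℕ} (C : Matrix (Fin m) (Fin p) ℝ) (h : C.rank < p) :
    ∃ w : Fin p → ℝ, w ≠ 0 ∧ C.mulVec w = 0 := by
  by_contra hc
  push_neg at hc
  have hinj : Function.Injective C.mulVecLin := by
    rw [← LinearMap.ker_eq_bot, LinearMap.ker_eq_bot']
    intro w hw
    by_contra hw0
    exact (hc w hw0) hw
  have : C.rank = p := by
    have h1 : C.rank = Module.finrank ℝ (LinearMap.range C.mulVecLin) := rfl
    rw [h1, LinearMap.finrank_range_of_inj hinj, Module.finrank_fin_fun]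
  omega

lemma eq_zero_of_rank_le_zero {m p : ℕ} (M : Matrix (Fin m) (Fin p) ℝ) (h : M.rank ≤ 0) :
    M = 0 := by
  have h0 : M.rank = 0 := Nat.le_zero.mp h
  have h1 : Module.finrank ℝ (LinearMap.range M.mulVecLin) = 0 := h0
  have h2 : LinearMap.range M.mulVecLin = ⊥ := Submodule.finrank_eq_zero.mp h1
  have h3 : ∀ x, M.mulVec x = 0 := by
    intro x
    have : M.mulVecLin x ∈ LinearMap.range M.mulVecLin := LinearMap.mem_range_self _ x
    rw [h2] at this
    simpa using this
  ext i j
  have := congrFun (h3 (Pi.single j 1)) i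
  simpa [Matrix.mulVec_single] using this



noncomputable def ed (dx r : ℕ) : Matrix (Fin dx) (Fin dx) ℝ :=
  Matrix.diagonal (fun k => if (k : ℕ) < r then 1 else 0)

lemma ed_transpose (dx r : ℕ) : (ed dx r)ᵀ = ed dx r := Matrix.diagonal_transpose _

lemma ed_mul_ed (dx r : ℕ) : ed dx r * ed dx r = ed dx r := by
  rw [ed, Matrix.diagonal_mul_diagonal]
  refine congrArg Matrix.diagonal (funext fun k => ?_)
  by_cases h : (k : ℕ) < r <;> simp [h]

lemma rank_ed_le (dx r : ℕ) : (ed dx r).rank ≤ r := by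
  rw [ed, Matrix.rank_diagonal]
  have : Fintype.card {k : Fin dx // (if (k : ℕ) < r then (1:ℝ) else 0) ≠ 0} ≤
      Fintype.card (Fin r) := by
    apply Fintype.card_le_of_injective (fun x => ⟨(x.1 : ℕ), by
      rcases x with ⟨k, hk⟩
      by_contra hge
      simp only [not_lt] at hge
      simp [Nat.not_lt.mpr hge] at hk⟩)
    intro x y hxy
    have h := congrArg Fin.val hxy
    simp only [] at h
    exact Subtype.ext (Fin.val_injective h)
  simpa using this

lemma card_filter_lt (d r : ℕ) (hr : r ≤ d) :
    ((Finset.univ : Finset (Fin d)).filter (fun k : Fin d => (k : ℕ) < r)).card = r := by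
  have : ((Finset.univ : Finset (Fin d)).filter (fun k : Fin d => (k : ℕ) < r)) =
      Finset.map (Fin.castLEEmb hr) Finset.univ := by
    ext k
    simp only [Finset.mem_filter, Finset.mem_univ, true_and, Finset.mem_map]
    constructor
    · intro hk
      refine ⟨⟨(k : ℕ), hk⟩, ?_⟩
      ext
      simp [Fin.castLEEmb, Fin.castLE]
    · rintro ⟨j, rfl⟩
      simpa [Fin.castLEEmb, Fin.castLE] using j.2
  rw [this, Finset.card_map, Finset.card_univ, Fintype.card_fin]

lemma lp_bound {d r : ℕ} (hr : r < d) (μ t : Fin d → ℝ) (hμa : Antitone μ) (hμ0 : ∀ k, 0 ≤ μ k)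
    (ht0 : ∀ k, 0 ≤ t k) (ht1 : ∀ k, t k ≤ 1) (hts : ∑ k, t k ≤ (r : ℝ)) :
    (∑ k, μ k * t k ≤ ∑ k, μ k * (if (k : ℕ) < r then 1 else 0)) ∧
    (∑ k, μ k * t k = ∑ k, μ k * (if (k : ℕ) < r then 1 else 0) →
      ∀ k : Fin d, (k : ℕ) < r → μ ⟨r, hr⟩ < μ k → t k = 1) := by
  set μr := μ ⟨r, hr⟩ with hμr
  set e : Fin d → ℝ := fun k => if (k : ℕ) < r then 1 else 0 with he
  have hsum_e : ∑ k, e k = (r : ℝ) := by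
    have h1 : ∑ k, e k = (((Finset.univ : Finset (Fin d)).filter (fun k : Fin d => (k : ℕ) < r)).card : ℝ) := by
      rw [he, Finset.card_filter]
      push_cast
      exact Finset.sum_congr rfl fun k _ => by by_cases h : (k : ℕ) < r <;> simp [h]
    rw [h1, card_filter_lt d r (le_of_lt hr)]
  have hterm : ∀ k : Fin d, 0 ≤ (μ k - μr) * (e k - t k) := by
    intro k
    by_cases h : (k : ℕ) < r
    · have h1 : μr ≤ μ k := hμa (by rw [Fin.le_def]; exact le_of_lt h)
      have h2 : e k = 1 := by simp [he, h]
      have := ht1 k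
      nlinarith
    · have h1 : μ k ≤ μr := hμa (by rw [Fin.le_def]; simpa using Nat.le_of_not_lt h)
      have h2 : e k = 0 := by simp [he, h]
      have := ht0 k
      nlinarith
  have hkey : ∑ k, (μ k - μr) * (e k - t k) =
      (∑ k, μ k * e k - ∑ k, μ k * t k) - μr * ((r : ℝ) - ∑ k, t k) := by
    have hpt : ∀ k : Fin d, (μ k - μr) * (e k - t k) =
        (μ k * e k - μ k * t k) - (μr * e k - μr * t k) := fun k => by ring
    simp only [hpt, Finset.sum_sub_distrib, ← Finset.mul_sum]
    rw [← hsum_e, mul_sub]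
  have hslack : 0 ≤ μr * ((r : ℝ) - ∑ k, t k) := by
    have := hμ0 ⟨r, hr⟩
    have h2 : 0 ≤ (r : ℝ) - ∑ k, t k := by linarith
    positivity
  have hterm_sum : 0 ≤ ∑ k, (μ k - μr) * (e k - t k) :=
    Finset.sum_nonneg fun k _ => hterm k
  constructor
  · nlinarith [hterm_sum, hslack, hkey]
  · intro heq k hk hgap
    have hzero : ∑ k, (μ k - μr) * (e k - t k) = 0 := by
      rw [hkey, heq]
      have h1 : ∑ k, (μ k - μr) * (e k - t k) ≥ 0 := hterm_sum
      nlinarith [hslack, hkey, h1]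
    have := (Finset.sum_eq_zero_iff_of_nonneg (fun k _ => hterm k)).mp hzero k (Finset.mem_univ k)
    have h2 : e k = 1 := by simp [he, hk]
    rw [h2] at this
    rcases mul_eq_zero.mp this with h | h
    · linarith
    · linarith



lemma euclid_norm_eq {p : ℕ} (v : Fin p → ℝ) :
    ‖(WithLp.equiv 2 (Fin p → ℝ)).symm v‖ = Real.sqrt (∑ j, (v j) ^ 2) := by
  rw [EuclideanSpace.norm_eq]
  congr 1
  exact Finset.sum_congr rfl fun j _ => by
    rw [WithLp.equiv_symm_apply, WithLp.ofLp_toLp, Real.norm_eq_abs, sq_abs]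

lemma toEuclideanLin_apply' {m p : ℕ} (M : Matrix (Fin m) (Fin p) ℝ) (v : Fin p → ℝ) :
    Matrix.toEuclideanLin M ((WithLp.equiv 2 (Fin p → ℝ)).symm v) =
      (WithLp.equiv 2 (Fin m → ℝ)).symm (M.mulVec v) := by
  rfl

lemma opNorm_bound_apply {m p : ℕ} (M : Matrix (Fin m) (Fin p) ℝ) (x : Fin p → ℝ) :
    Real.sqrt (∑ i, (M.mulVec x i) ^ 2) ≤ opNorm M * Real.sqrt (∑ j, (x j) ^ 2) := by
  have h := (LinearMap.toContinuousLinearMap (Matrix.toEuclideanLin M)).le_opNorm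
      ((WithLp.equiv 2 (Fin p → ℝ)).symm x)
  rw [LinearMap.coe_toContinuousLinearMap'] at h
  rw [toEuclideanLin_apply', euclid_norm_eq, euclid_norm_eq] at h
  exact h

lemma opNorm_le_of_bound {m p : ℕ} (M : Matrix (Fin m) (Fin p) ℝ) (c : ℝ) (hc : 0 ≤ c)
    (h : ∀ x : Fin p → ℝ,
      Real.sqrt (∑ i, (M.mulVec x i) ^ 2) ≤ c * Real.sqrt (∑ j, (x j) ^ 2)) :
    opNorm M ≤ c := by
  apply ContinuousLinearMap.opNorm_le_bound _ hc
  intro x'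
  have hx : x' = (WithLp.equiv 2 (Fin p → ℝ)).symm ((WithLp.equiv 2 (Fin p → ℝ)) x') := by
    simp
  rw [LinearMap.coe_toContinuousLinearMap', hx, toEuclideanLin_apply', euclid_norm_eq,
    euclid_norm_eq]
  exact h _

lemma dot_mul_dot {p q s : ℕ} (M : Matrix (Fin p) (Fin q) ℝ) (N : Matrix (Fin p) (Fin s) ℝ)
    (v : Fin q → ℝ) (w : Fin s → ℝ) :
    (M.mulVec v) ⬝ᵥ (N.mulVec w) = v ⬝ᵥ ((Mᵀ * N).mulVec w) := by
  rw [← Matrix.mulVec_mulVec, Matrix.dotProduct_mulVec v Mᵀ, Matrix.vecMul_transpose]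

lemma dot_self_eq_sum_sq {p : ℕ} (v : Fin p → ℝ) : v ⬝ᵥ v = ∑ j, (v j) ^ 2 := by
  simp [dotProduct, sq]



lemma one_submatrix_mul {d q p : ℕ} (M : Matrix (Fin d) (Fin q) ℝ) (ι : Fin p → Fin d) :
    ((1 : Matrix (Fin d) (Fin d) ℝ).submatrix ι id) * M = M.submatrix ι id := by
  ext j b
  simp [Matrix.mul_apply, Matrix.one_apply]

lemma mul_one_submatrix {d q p : ℕ} (M : Matrix (Fin q) (Fin d) ℝ) (ι : Fin p → Fin d) :
    M * ((1 : Matrix (Fin d) (Fin d) ℝ).submatrix id ι) = M.submatrix id ι := by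
  ext a j
  simp [Matrix.mul_apply, Matrix.one_apply]

lemma sqrt_mu_le_opNorm {dy dx : ℕ} (A : Matrix (Fin dy) (Fin dx) ℝ)
    (U : Matrix (Fin dx) (Fin dx) ℝ) (μ : Fin dx → ℝ)
    (hU2 : Uᵀ * U = 1) (hG : Aᵀ * A = U * Matrix.diagonal μ * Uᵀ)
    (hμa : Antitone μ) (hμ0 : ∀ k, 0 ≤ μ k)
    {k : ℕ} (hk : k < dx) (B : Matrix (Fin dy) (Fin dx) ℝ) (hB : B.rank ≤ k) :
    Real.sqrt (μ ⟨k, hk⟩) ≤ opNorm (A - B) := by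
  set ι : Fin (k+1) → Fin dx := fun j => ⟨(j : ℕ), lt_of_le_of_lt (Nat.lt_succ_iff.mp j.2) hk⟩
    with hι
  have hι_inj : Function.Injective ι := by
    intro a b hab
    have := congrArg Fin.val hab
    simp only [hι] at this
    exact Fin.ext this
  set U' : Matrix (Fin dx) (Fin (k+1)) ℝ := U.submatrix id ι with hU'
  have hrankC : (B * U').rank < k + 1 :=
    lt_of_le_of_lt (le_trans (Matrix.rank_mul_le_left B U') hB) (Nat.lt_succ_self k)
  obtain ⟨w, hw0, hCw⟩ := exists_kernel_vec (B * U') hrankC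
  set x : Fin dx → ℝ := U'.mulVec w with hx
  -- U'ᵀ * U' = 1
  have hU'tU' : U'ᵀ * U' = 1 := by
    rw [hU', Matrix.transpose_submatrix, ← Matrix.submatrix_mul Uᵀ U ι id ι
      Function.bijective_id, hU2]
    ext a b
    simp [Matrix.one_apply, hι_inj.eq_iff]
  -- U'ᵀ * (Aᵀ A) * U' = diagonal (μ ∘ ι)
  have hdiag : U'ᵀ * (Aᵀ * A) * U' = Matrix.diagonal (fun j => μ (ι j)) := by
    rw [hG, hU', Matrix.transpose_submatrix]
    have e1 : Uᵀ.submatrix ι id * (U * Matrix.diagonal μ * Uᵀ) =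
        ((Uᵀ * (U * Matrix.diagonal μ * Uᵀ))).submatrix ι id := by
      ext j b
      simp [Matrix.mul_apply]
    rw [e1]
    have e11 : Uᵀ * (U * Matrix.diagonal μ * Uᵀ) = Matrix.diagonal μ * Uᵀ := by
      calc Uᵀ * (U * Matrix.diagonal μ * Uᵀ) = (Uᵀ * U) * (Matrix.diagonal μ * Uᵀ) := by
            simp only [Matrix.mul_assoc]
        _ = Matrix.diagonal μ * Uᵀ := by rw [hU2, Matrix.one_mul]
    rw [e11]
    have e2 : (Matrix.diagonal μ * Uᵀ).submatrix ι id * U.submatrix id ι =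
        ((Matrix.diagonal μ * Uᵀ) * U).submatrix ι ι := by
      ext j b
      simp [Matrix.mul_apply]
    rw [e2, Matrix.mul_assoc, hU2, Matrix.mul_one, Matrix.submatrix_diagonal μ ι hι_inj]
    rfl
  -- key quantities
  have hx_self : x ⬝ᵥ x = w ⬝ᵥ w := by
    rw [hx, dot_mul_dot, hU'tU', Matrix.one_mulVec]
  have hAx : (A.mulVec x) ⬝ᵥ (A.mulVec x) = w ⬝ᵥ ((Matrix.diagonal (fun j => μ (ι j))).mulVec w) := by
    rw [hx, dot_mul_dot, ← hdiag, Matrix.mulVec_mulVec, dot_mul_dot U' ((Aᵀ * A) * U') w w]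
    simp only [Matrix.mul_assoc]
  have hABx : (A - B).mulVec x = A.mulVec x := by
    have hB0 : B.mulVec x = 0 := by rw [hx, Matrix.mulVec_mulVec, hCw]
    rw [Matrix.sub_mulVec, hB0, sub_zero]
  -- positivity of w
  have hsw : 0 < ∑ j, (w j) ^ 2 := by
    obtain ⟨j, hj⟩ : ∃ j, w j ≠ 0 := by
      by_contra hc
      push_neg at hc
      exact hw0 (funext hc)
    exact Finset.sum_pos' (fun j _ => by positivity)
      ⟨j, Finset.mem_univ j, by positivity⟩
  -- lower bound on ‖Ax‖²
  have hlow : μ ⟨k, hk⟩ * ∑ j, (w j) ^ 2 ≤ ∑ i, ((A - B).mulVec x i) ^ 2 := by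
    have h1 : ∑ i, ((A - B).mulVec x i) ^ 2 = w ⬝ᵥ ((Matrix.diagonal (fun j => μ (ι j))).mulVec w) := by
      rw [← dot_self_eq_sum_sq, hABx, hAx]
    have h2 : w ⬝ᵥ ((Matrix.diagonal (fun j => μ (ι j))).mulVec w) = ∑ j, μ (ι j) * (w j) ^ 2 := by
      simp [dotProduct, Matrix.mulVec_diagonal, sq]
      exact Finset.sum_congr rfl fun j _ => by ring
    rw [h1, h2, Finset.mul_sum]
    apply Finset.sum_le_sum
    intro j _
    have hμj : μ ⟨k, hk⟩ ≤ μ (ι j) := by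
      apply hμa
      rw [Fin.le_def]
      exact Nat.lt_succ_iff.mp j.2
    have : (0:ℝ) ≤ (w j)^2 := by positivity
    nlinarith
  -- conclude
  have hbig := opNorm_bound_apply (A - B) x
  have hxsum : ∑ j, (x j) ^ 2 = ∑ j, (w j) ^ 2 := by
    rw [← dot_self_eq_sum_sq, ← dot_self_eq_sum_sq, hx_self]
  rw [hxsum] at hbig
  have hstep : Real.sqrt (μ ⟨k, hk⟩ * ∑ j, (w j) ^ 2) ≤
      opNorm (A - B) * Real.sqrt (∑ j, (w j) ^ 2) :=
    le_trans (Real.sqrt_le_sqrt hlow) hbig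
  rw [Real.sqrt_mul (hμ0 _)] at hstep
  have hpos : 0 < Real.sqrt (∑ j, (w j) ^ 2) := Real.sqrt_pos.mpr hsw
  exact le_of_mul_le_mul_right hstep hpos



lemma opNorm_trunc_le {dy dx : ℕ} (A : Matrix (Fin dy) (Fin dx) ℝ)
    (U : Matrix (Fin dx) (Fin dx) ℝ) (μ : Fin dx → ℝ)
    (hU1 : U * Uᵀ = 1) (hU2 : Uᵀ * U = 1)
    (hG : Aᵀ * A = U * Matrix.diagonal μ * Uᵀ)
    (hμa : Antitone μ) (hμ0 : ∀ k, 0 ≤ μ k)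
    {k : ℕ} (hk : k < dx) :
    opNorm (A - A * (U * ed dx k * Uᵀ)) ≤ Real.sqrt (μ ⟨k, hk⟩) := by
  set e : Fin dx → ℝ := fun k' => if (k' : ℕ) < k then 1 else 0 with he
  set g : Fin dx → ℝ := fun k' => (1 - e k') * μ k' * (1 - e k') with hg
  set Q : Matrix (Fin dx) (Fin dx) ℝ := U * ed dx k * Uᵀ with hQ
  set M : Matrix (Fin dy) (Fin dx) ℝ := A - A * Q with hM
  have hMA : M = A * (1 - Q) := by rw [Matrix.mul_sub, Matrix.mul_one]
  -- (1 - Q) * U = U * (1 - ed)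
  have hQU : Q * U = U * ed dx k := by
    rw [hQ, Matrix.mul_assoc, Matrix.mul_assoc, hU2, Matrix.mul_one]
  have hUQ : Uᵀ * Q = ed dx k * Uᵀ := by
    rw [hQ, ← Matrix.mul_assoc, ← Matrix.mul_assoc, hU2, Matrix.one_mul]
  have hMtM : Mᵀ * M = U * Matrix.diagonal g * Uᵀ := by
    rw [hMA, Matrix.transpose_mul, Matrix.transpose_sub, Matrix.transpose_one]
    have hQt : Qᵀ = Q := by
      rw [hQ, Matrix.transpose_mul, Matrix.transpose_mul, Matrix.transpose_transpose,
        ed, Matrix.diagonal_transpose, Matrix.mul_assoc]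
    rw [hQt]
    calc (1 - Q) * Aᵀ * (A * (1 - Q)) = (1 - Q) * (Aᵀ * A) * (1 - Q) := by
          simp only [Matrix.mul_assoc]
      _ = (1 - Q) * (U * Matrix.diagonal μ * Uᵀ) * (1 - Q) := by rw [hG]
      _ = ((1 - Q) * U) * Matrix.diagonal μ * (Uᵀ * (1 - Q)) := by
          simp only [Matrix.mul_assoc]
      _ = (U * (1 - ed dx k)) * Matrix.diagonal μ * ((1 - ed dx k) * Uᵀ) := by
          have hQUs : (1 - Q) * U = U * (1 - ed dx k) := by
            rw [Matrix.sub_mul, Matrix.one_mul, hQU, Matrix.mul_sub, Matrix.mul_one]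
          have hUQs : Uᵀ * (1 - Q) = (1 - ed dx k) * Uᵀ := by
            rw [Matrix.mul_sub, Matrix.mul_one, hUQ, Matrix.sub_mul, Matrix.one_mul]
          rw [hQUs, hUQs]
      _ = U * ((1 - ed dx k) * Matrix.diagonal μ * (1 - ed dx k)) * Uᵀ := by
          simp only [Matrix.mul_assoc]
      _ = U * Matrix.diagonal g * Uᵀ := by
          have h1 : (1 : Matrix (Fin dx) (Fin dx) ℝ) - ed dx k =
              Matrix.diagonal (fun k' => 1 - e k') := by
            rw [ed, ← Matrix.diagonal_one, Matrix.diagonal_sub]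
          rw [h1, Matrix.diagonal_mul_diagonal, Matrix.diagonal_mul_diagonal]
  apply opNorm_le_of_bound _ _ (Real.sqrt_nonneg _)
  intro x
  set y : Fin dx → ℝ := Uᵀ.mulVec x with hy
  have hval : ∑ i, (M.mulVec x i) ^ 2 = (Uᵀ.mulVec x) ⬝ᵥ ((Matrix.diagonal g).mulVec (Uᵀ.mulVec x)) := by
    rw [← dot_self_eq_sum_sq, dot_mul_dot, hMtM]
    have h2 : x ⬝ᵥ ((U * Matrix.diagonal g * Uᵀ).mulVec x) =
        x ⬝ᵥ ((Uᵀᵀ * (Matrix.diagonal g * Uᵀ)).mulVec x) := by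
      rw [Matrix.transpose_transpose]; simp only [Matrix.mul_assoc]
    rw [h2, ← dot_mul_dot Uᵀ (Matrix.diagonal g * Uᵀ) x x, ← Matrix.mulVec_mulVec]
  have hxn : ∑ j, ((Uᵀ.mulVec x) j) ^ 2 = ∑ j, (x j) ^ 2 := by
    rw [← dot_self_eq_sum_sq, ← dot_self_eq_sum_sq, dot_mul_dot, Matrix.transpose_transpose,
      hU1, Matrix.one_mulVec]
  have hgb : ∀ j : Fin dx, g j * (y j) ^ 2 ≤ μ ⟨k, hk⟩ * (y j) ^ 2 := by
    intro j
    have hsq : (0:ℝ) ≤ (y j)^2 := by positivity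
    by_cases h : (j : ℕ) < k
    · have : g j = 0 := by simp [hg, he, h]
      rw [this]
      have := hμ0 ⟨k, hk⟩
      nlinarith
    · have hgj : g j = μ j := by simp [hg, he, h]
      have : μ j ≤ μ ⟨k, hk⟩ := hμa (by rw [Fin.le_def]; simpa using Nat.le_of_not_lt h)
      rw [hgj]
      nlinarith
  have hdot : y ⬝ᵥ ((Matrix.diagonal g).mulVec y) = ∑ j, g j * (y j) ^ 2 := by
    simp [dotProduct, Matrix.mulVec_diagonal, sq]
    exact Finset.sum_congr rfl fun j _ => by ring
  have hbound : ∑ i, (M.mulVec x i) ^ 2 ≤ μ ⟨k, hk⟩ * ∑ j, (x j) ^ 2 := by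
    rw [hval, hdot, ← hxn, Finset.mul_sum]
    exact Finset.sum_le_sum fun j _ => hgb j
  calc Real.sqrt (∑ i, (M.mulVec x i) ^ 2) ≤ Real.sqrt (μ ⟨k, hk⟩ * ∑ j, (x j) ^ 2) :=
        Real.sqrt_le_sqrt hbound
    _ = Real.sqrt (μ ⟨k, hk⟩) * Real.sqrt (∑ j, (x j) ^ 2) := Real.sqrt_mul (hμ0 _) _

lemma sval_le_sqrt {dy dx : ℕ} (A : Matrix (Fin dy) (Fin dx) ℝ)
    (U : Matrix (Fin dx) (Fin dx) ℝ) (μ : Fin dx → ℝ)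
    (hU1 : U * Uᵀ = 1) (hU2 : Uᵀ * U = 1)
    (hG : Aᵀ * A = U * Matrix.diagonal μ * Uᵀ)
    (hμa : Antitone μ) (hμ0 : ∀ k, 0 ≤ μ k)
    {k : ℕ} (hk : k < dx) :
    sval A (k + 1) ≤ Real.sqrt (μ ⟨k, hk⟩) := by
  have hbdd : BddBelow ((fun B => opNorm (A - B)) '' {B | B.rank < k + 1}) := by
    refine ⟨0, ?_⟩
    rintro y ⟨B, -, rfl⟩
    exact norm_nonneg _
  have hrank : (A * (U * ed dx k * Uᵀ)).rank < k + 1 := by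
    have h1 : (A * (U * ed dx k * Uᵀ)).rank ≤ (U * ed dx k * Uᵀ).rank :=
      Matrix.rank_mul_le_right _ _
    have h2 : (U * ed dx k * Uᵀ).rank ≤ (ed dx k * Uᵀ).rank := by
      rw [Matrix.mul_assoc]
      exact Matrix.rank_mul_le_right _ _
    have h3 : (ed dx k * Uᵀ).rank ≤ (ed dx k).rank := Matrix.rank_mul_le_left _ _
    have := rank_ed_le dx k
    omega
  have hmem : opNorm (A - A * (U * ed dx k * Uᵀ)) ∈
      ((fun B => opNorm (A - B)) '' {B | B.rank < k + 1}) :=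
    ⟨A * (U * ed dx k * Uᵀ), hrank, rfl⟩
  exact le_trans (csInf_le hbdd hmem) (opNorm_trunc_le A U μ hU1 hU2 hG hμa hμ0 hk)

lemma sqrt_le_sval {dy dx : ℕ} (A : Matrix (Fin dy) (Fin dx) ℝ)
    (U : Matrix (Fin dx) (Fin dx) ℝ) (μ : Fin dx → ℝ)
    (hU2 : Uᵀ * U = 1) (hG : Aᵀ * A = U * Matrix.diagonal μ * Uᵀ)
    (hμa : Antitone μ) (hμ0 : ∀ k, 0 ≤ μ k)
    {k : ℕ} (hk : k < dx) :
    Real.sqrt (μ ⟨k, hk⟩) ≤ sval A (k + 1) := by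
  apply le_csInf
  · exact ⟨opNorm (A - 0), 0, by simp [Matrix.rank_zero], rfl⟩
  · rintro y ⟨B, hB, rfl⟩
    exact sqrt_mu_le_opNorm A U μ hU2 hG hμa hμ0 hk B (Nat.lt_succ_iff.mp hB)



lemma fsq_mul_proj {dy dx : ℕ} (A : Matrix (Fin dy) (Fin dx) ℝ)
    (R : Matrix (Fin dx) (Fin dx) ℝ) (hRt : Rᵀ = R) (hRR : R * R = R) :
    fsq (A * R) = Matrix.trace ((Aᵀ * A) * R) := by
  rw [fsq, Matrix.transpose_mul, hRt]
  calc Matrix.trace (R * Aᵀ * (A * R)) = Matrix.trace (R * ((Aᵀ * A) * R)) := by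
        simp only [Matrix.mul_assoc]
    _ = Matrix.trace ((Aᵀ * A) * R * R) := by
        rw [Matrix.trace_mul_comm]
    _ = Matrix.trace ((Aᵀ * A) * R) := by rw [Matrix.mul_assoc, hRR]

lemma finner_mul_proj {dy dx : ℕ} (A : Matrix (Fin dy) (Fin dx) ℝ)
    (R S : Matrix (Fin dx) (Fin dx) ℝ) (hRt : Rᵀ = R) :
    finner (A * R) (A * S) = Matrix.trace ((Aᵀ * A) * (S * R)) := by
  rw [finner, Matrix.transpose_mul, hRt]
  calc Matrix.trace (R * Aᵀ * (A * S)) = Matrix.trace (R * ((Aᵀ * A) * S)) := by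
        simp only [Matrix.mul_assoc]
    _ = Matrix.trace ((Aᵀ * A) * S * R) := by
        rw [Matrix.trace_mul_comm]
    _ = Matrix.trace ((Aᵀ * A) * (S * R)) := by rw [Matrix.mul_assoc]

lemma trace_G_mul {dy dx : ℕ} (A : Matrix (Fin dy) (Fin dx) ℝ)
    (U : Matrix (Fin dx) (Fin dx) ℝ) (μ : Fin dx → ℝ)
    (hG : Aᵀ * A = U * Matrix.diagonal μ * Uᵀ)
    (R : Matrix (Fin dx) (Fin dx) ℝ) :
    Matrix.trace ((Aᵀ * A) * R) = Matrix.trace (Matrix.diagonal μ * (Uᵀ * R * U)) := by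
  rw [hG]
  calc Matrix.trace (U * Matrix.diagonal μ * Uᵀ * R)
      = Matrix.trace (U * (Matrix.diagonal μ * (Uᵀ * R))) := by simp only [Matrix.mul_assoc]
    _ = Matrix.trace ((Matrix.diagonal μ * (Uᵀ * R)) * U) := Matrix.trace_mul_comm _ _
    _ = Matrix.trace (Matrix.diagonal μ * (Uᵀ * R * U)) := by simp only [Matrix.mul_assoc]

lemma best_approx_eq {dy dx : ℕ} (A : Matrix (Fin dy) (Fin dx) ℝ)
    (U : Matrix (Fin dx) (Fin dx) ℝ) (μ : Fin dx → ℝ)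
    (hU1 : U * Uᵀ = 1) (hU2 : Uᵀ * U = 1)
    (hG : Aᵀ * A = U * Matrix.diagonal μ * Uᵀ)
    (hμa : Antitone μ) (hμ0 : ∀ k, 0 ≤ μ k)
    {r : ℕ} (hrdx : r < dx)
    (hgap : ∀ k : Fin dx, (k : ℕ) < r → μ ⟨r, hrdx⟩ < μ k)
    (B : Matrix (Fin dy) (Fin dx) ℝ) (hBr : B.rank ≤ r)
    (hBmin : ∀ C : Matrix (Fin dy) (Fin dx) ℝ, C.rank ≤ r → fsq (A - B) ≤ fsq (A - C)) :
    B = A * (U * ed dx r * Uᵀ) := by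
  classical
  obtain ⟨Pm, hPt, hPP, hBP, hPtr⟩ := exists_proj B
  set t : Fin dx → ℝ := fun k => (Uᵀ * Pm * U) k k with ht
  set e : Fin dx → ℝ := fun k => if (k : ℕ) < r then 1 else 0 with he
  set Pstar : Matrix (Fin dx) (Fin dx) ℝ := U * ed dx r * Uᵀ with hPstar
  have hPst : Pstarᵀ = Pstar := by
    rw [hPstar, Matrix.transpose_mul, Matrix.transpose_mul, Matrix.transpose_transpose,
      ed_transpose, Matrix.mul_assoc]
  have hPsP : Pstar * Pstar = Pstar := by
    calc Pstar * Pstar = U * ed dx r * (Uᵀ * U) * ed dx r * Uᵀ := by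
          rw [hPstar]; simp only [Matrix.mul_assoc]
      _ = U * (ed dx r * ed dx r) * Uᵀ := by
          rw [hU2, Matrix.mul_one]; simp only [Matrix.mul_assoc]
      _ = Pstar := by rw [ed_mul_ed, hPstar]
  have hUPsU : Uᵀ * Pstar * U = ed dx r := by
    calc Uᵀ * Pstar * U = (Uᵀ * U) * ed dx r * (Uᵀ * U) := by
          rw [hPstar]; simp only [Matrix.mul_assoc]
      _ = ed dx r := by rw [hU2, Matrix.one_mul, Matrix.mul_one]
  -- basic facts about t
  have hUPU_eq : Uᵀ * Pm * U = (Pm * U)ᵀ * (Pm * U) := by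
    rw [Matrix.transpose_mul, hPt]
    conv_lhs => rw [← hPP]
    simp only [Matrix.mul_assoc]
  have ht0 : ∀ k, 0 ≤ t k := by
    intro k
    rw [ht]
    simp only
    rw [hUPU_eq, diag_mtm]
    positivity
  have hone : ∀ k : Fin dx, (Uᵀ * (1 - Pm) * U) k k = 1 - t k := by
    intro k
    have : Uᵀ * (1 - Pm) * U = 1 - Uᵀ * Pm * U := by
      rw [Matrix.mul_sub, Matrix.mul_one, Matrix.sub_mul, hU2]
    rw [this, Matrix.sub_apply, Matrix.one_apply_eq, ht]
  have ht1 : ∀ k, t k ≤ 1 := by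
    intro k
    have h1 : Uᵀ * (1 - Pm) * U = ((1 - Pm) * U)ᵀ * ((1 - Pm) * U) := by
      have hs : (1 - Pm)ᵀ = 1 - Pm := by rw [Matrix.transpose_sub, Matrix.transpose_one, hPt]
      have hss : (1 - Pm) * (1 - Pm) = 1 - Pm := by
        rw [Matrix.sub_mul, Matrix.one_mul, Matrix.mul_sub, Matrix.mul_one, hPP]
        abel
      rw [Matrix.transpose_mul, hs]
      conv_lhs => rw [← hss]
      simp only [Matrix.mul_assoc]
    have h2 : 0 ≤ 1 - t k := by
      rw [← hone k, h1, diag_mtm]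
      positivity
    linarith
  have hts : ∑ k, t k ≤ (r : ℝ) := by
    have h1 : ∑ k, t k = Matrix.trace (Uᵀ * Pm * U) := by
      rw [Matrix.trace]
      exact Finset.sum_congr rfl fun k _ => rfl
    have h2 : Matrix.trace (Uᵀ * Pm * U) = Matrix.trace Pm := by
      calc Matrix.trace (Uᵀ * Pm * U) = Matrix.trace (Uᵀ * (Pm * U)) := by
            rw [Matrix.mul_assoc]
        _ = Matrix.trace ((Pm * U) * Uᵀ) := Matrix.trace_mul_comm _ _
        _ = Matrix.trace (Pm * (U * Uᵀ)) := by rw [Matrix.mul_assoc]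
        _ = Matrix.trace Pm := by rw [hU1, Matrix.mul_one]
    rw [h1, h2, hPtr]
    exact_mod_cast hBr
  -- fsq computations
  have hfsqAP : fsq (A * Pm) = ∑ k, μ k * t k := by
    rw [fsq_mul_proj A Pm hPt hPP, trace_G_mul A U μ hG Pm, trace_diagonal_mul]
  have hfsqAPs : fsq (A * Pstar) = ∑ k, μ k * e k := by
    rw [fsq_mul_proj A Pstar hPst hPsP, trace_G_mul A U μ hG Pstar, hUPsU,
      trace_diagonal_mul]
    exact Finset.sum_congr rfl fun k _ => by rw [ed, Matrix.diagonal_apply_eq]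
  have hpyA : fsq (A - A * Pm) = fsq A - fsq (A * Pm) := by
    have := fsq_pyth Pm hPt hPP A
    linarith
  have hpyAs : fsq (A - A * Pstar) = fsq A - fsq (A * Pstar) := by
    have := fsq_pyth Pstar hPst hPsP A
    linarith
  -- decomposition of fsq (A - B)
  have hdecomp : fsq (A - B) = fsq (A - A * Pm) + fsq (A * Pm - B) := by
    have hsplit : A - B = (A - A * Pm) + (A * Pm - B) := by abel
    have hproj : (A * Pm - B) * Pm = A * Pm - B := by
      rw [Matrix.sub_mul, Matrix.mul_assoc, hPP, hBP]
    have hcross : finner (A - A * Pm) (A * Pm - B) = 0 := by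
      rw [← hproj]
      exact finner_cross Pm hPt hPP A (A * Pm - B)
    rw [hsplit, fsq_add_expand, hcross]
    ring
  -- rank of A * Pstar
  have hrkPs : (A * Pstar).rank ≤ r := by
    have h1 : (A * Pstar).rank ≤ Pstar.rank := Matrix.rank_mul_le_right _ _
    have h2 : Pstar.rank ≤ (ed dx r * Uᵀ).rank := by
      rw [hPstar, Matrix.mul_assoc]
      exact Matrix.rank_mul_le_right _ _
    have h3 : (ed dx r * Uᵀ).rank ≤ (ed dx r).rank := Matrix.rank_mul_le_left _ _
    have := rank_ed_le dx r
    omega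
  have hmin := hBmin (A * Pstar) hrkPs
  -- LP bound
  obtain ⟨hlp1, hlp2⟩ := lp_bound hrdx μ t hμa hμ0 ht0 ht1 hts
  have hlp1' : ∑ k, μ k * t k ≤ ∑ k, μ k * e k := hlp1
  -- squeeze
  have hfle : fsq (A - A * Pm) ≥ fsq A - ∑ k, μ k * e k := by
    rw [hpyA, hfsqAP]; linarith
  have hsq0 : fsq (A * Pm - B) = 0 ∧ ∑ k, μ k * t k = ∑ k, μ k * e k := by
    have h1 : fsq (A - B) ≤ fsq A - ∑ k, μ k * e k := by
      rw [hpyAs, hfsqAPs] at hmin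
      linarith
    have h2 := fsq_nonneg (A * Pm - B)
    constructor
    · rw [hdecomp, hpyA, hfsqAP] at h1
      linarith
    · rw [hdecomp, hpyA, hfsqAP] at h1
      have := fsq_nonneg (A * Pm - B)
      linarith
  have hBAP : B = A * Pm := by
    have := eq_zero_of_fsq_eq_zero hsq0.1
    have h2 : A * Pm - B = 0 := this
    linear_combination (norm := abel) -h2
  -- t k = 1 for k < r
  have ht_eq1 : ∀ k : Fin dx, (k : ℕ) < r → t k = 1 :=
    fun k hk => hlp2 hsq0.2 k hk (hgap k hk)
  -- Pm * (U * ed) = U * ed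
  have hPUE : Pm * (U * ed dx r) = U * ed dx r := by
    set M1 : Matrix (Fin dx) (Fin dx) ℝ := (1 - Pm) * U with hM1
    have hM1col : ∀ k : Fin dx, (k : ℕ) < r → ∀ i, M1 i k = 0 := by
      intro k hk
      apply col_eq_zero'
      have h1 : M1ᵀ * M1 = Uᵀ * (1 - Pm) * U := by
        rw [hM1, Matrix.transpose_mul]
        have hs : (1 - Pm)ᵀ = 1 - Pm := by
          rw [Matrix.transpose_sub, Matrix.transpose_one, hPt]
        have hss : (1 - Pm) * (1 - Pm) = 1 - Pm := by
          rw [Matrix.sub_mul, Matrix.one_mul, Matrix.mul_sub, Matrix.mul_one, hPP]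
          abel
        rw [hs]
        calc Uᵀ * (1 - Pm) * ((1 - Pm) * U) = Uᵀ * ((1 - Pm) * (1 - Pm)) * U := by
              simp only [Matrix.mul_assoc]
          _ = Uᵀ * (1 - Pm) * U := by rw [hss]
      rw [h1, hone k, ht_eq1 k hk, sub_self]
    have hM1E : M1 * ed dx r = 0 := by
      ext i k
      rw [ed, Matrix.mul_diagonal]
      by_cases hk : (k : ℕ) < r
      · rw [hM1col k hk i]
        simp
      · simp [hk]
    have h2 : (1 - Pm) * (U * ed dx r) = 0 := by
      rw [← Matrix.mul_assoc, ← hM1, hM1E]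
    have h3 : U * ed dx r - Pm * (U * ed dx r) = 0 := by
      rw [← h2, Matrix.sub_mul, Matrix.one_mul]
    linear_combination (norm := abel) -h3
  -- finner (A*Pm) (A*Pstar) = ∑ μ e
  have hfinner : finner (A * Pm) (A * Pstar) = ∑ k, μ k * e k := by
    rw [finner_mul_proj A Pm Pstar hPt, trace_G_mul A U μ hG (Pstar * Pm)]
    have h1 : Uᵀ * (Pstar * Pm) * U = ed dx r * (Uᵀ * Pm * U) := by
      calc Uᵀ * (Pstar * Pm) * U = (Uᵀ * U) * ed dx r * (Uᵀ * Pm * U) := by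
            rw [hPstar]; simp only [Matrix.mul_assoc]
        _ = ed dx r * (Uᵀ * Pm * U) := by rw [hU2, Matrix.one_mul]
    rw [h1]
    have h2 : Matrix.diagonal μ * (ed dx r * (Uᵀ * Pm * U)) =
        Matrix.diagonal (fun k => μ k * e k) * (Uᵀ * Pm * U) := by
      rw [ed, ← Matrix.mul_assoc, Matrix.diagonal_mul_diagonal]
    rw [h2, trace_diagonal_mul]
    refine Finset.sum_congr rfl fun k _ => ?_
    by_cases hk : (k : ℕ) < r
    · have := ht_eq1 k hk
      simp only [he, ht] at *
      rw [this]
      simp [hk]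
    · simp [he, hk]
  -- conclude A * Pm = A * Pstar
  have hfinal : A * Pm = A * Pstar := by
    have h1 : fsq (A * Pm - A * Pstar) = 0 := by
      rw [fsq_sub_expand, hfsqAP, hsq0.2, hfsqAPs, hfinner]
      ring
    have h2 := eq_zero_of_fsq_eq_zero h1
    linear_combination (norm := abel) h2
  rw [hBAP, hfinal, hPstar]


end LoraAux

open LoraAux

/-- The LoRA solution: `Δ̂_LoRA = [Δ̂_FFT Σ̂^{1/2}]_r (Σ̂^{1/2})⁺` minimizes
`‖ΔX − Δ̂_FFT X‖_F²` over rank-`≤ r` matrices and has minimal Frobenius norm among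
all minimizers.  Here `S` is the PSD square root of `Σ̂ = (1/n)XXᵀ`, `P` its
Moore–Penrose pseudoinverse (characterized by the Penrose equations), and `T` the
rank-`r` SVD truncation of `Δ̂_FFT S` (characterized as its best rank-`r`
approximation in Frobenius norm, unique thanks to the singular-value gap). -/
theorem lora_solution {dy dx n : ℕ} (r : ℕ) (hn : 0 < n)
    (X : Matrix (Fin dx) (Fin n) ℝ) (hX : X.rank = min n dx)
    (W : Matrix (Fin dy) (Fin dx) ℝ)  -- `W = Δ̂_FFT`
    (S : Matrix (Fin dx) (Fin dx) ℝ)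
    (hS : S.PosSemidef) (hSS : S * S = (n : ℝ)⁻¹ • (X * Xᵀ))
    (P : Matrix (Fin dx) (Fin dx) ℝ)
    (hP1 : S * P * S = S) (hP2 : P * S * P = P)
    (hP3 : (S * P)ᵀ = S * P) (hP4 : (P * S)ᵀ = P * S)
    (hrank : r ≤ (W * S).rank)
    (hgap : sval (W * S) (r + 1) < sval (W * S) r)
    (T : Matrix (Fin dy) (Fin dx) ℝ)
    (hT_rank : T.rank ≤ r)
    (hT_best : ∀ C : Matrix (Fin dy) (Fin dx) ℝ, C.rank ≤ r →
      frobNorm (W * S - T) ≤ frobNorm (W * S - C)) :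
    (T * P).rank ≤ r
      ∧ (∀ Δ : Matrix (Fin dy) (Fin dx) ℝ, Δ.rank ≤ r →
          frobNorm (T * P * X - W * X) ≤ frobNorm (Δ * X - W * X))
      ∧ (∀ Δ : Matrix (Fin dy) (Fin dx) ℝ, Δ.rank ≤ r →
          frobNorm (Δ * X - W * X) = frobNorm (T * P * X - W * X) →
          frobNorm (T * P) ≤ frobNorm Δ) := by
  have hn0 : (n : ℝ) ≠ 0 := Nat.cast_ne_zero.mpr hn.ne'
  have hnpos : (0 : ℝ) < n := by exact_mod_cast hn
  have hSt : Sᵀ = S := by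
    rw [← Matrix.conjTranspose_eq_transpose_of_trivial]
    exact hS.1
  -- scaling identity
  have hXX : X * Xᵀ = (n : ℝ) • (S * S) := by
    rw [hSS, smul_smul, mul_inv_cancel₀ hn0, one_smul]
  have hscale : ∀ M : Matrix (Fin dy) (Fin dx) ℝ, fsq (M * X) = n * fsq (M * S) := by
    intro M
    have h1 : fsq (M * X) = Matrix.trace ((Mᵀ * M) * (X * Xᵀ)) := by
      rw [fsq, Matrix.transpose_mul]
      calc Matrix.trace (Xᵀ * Mᵀ * (M * X)) = Matrix.trace (Xᵀ * ((Mᵀ * M) * X)) := by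
            simp only [Matrix.mul_assoc]
        _ = Matrix.trace ((Mᵀ * M) * X * Xᵀ) := by rw [Matrix.trace_mul_comm]
        _ = Matrix.trace ((Mᵀ * M) * (X * Xᵀ)) := by rw [Matrix.mul_assoc]
    have h2 : fsq (M * S) = Matrix.trace ((Mᵀ * M) * (S * S)) := by
      rw [fsq, Matrix.transpose_mul, hSt]
      calc Matrix.trace (S * Mᵀ * (M * S)) = Matrix.trace (S * ((Mᵀ * M) * S)) := by
            simp only [Matrix.mul_assoc]
        _ = Matrix.trace ((Mᵀ * M) * S * S) := by rw [Matrix.trace_mul_comm]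
        _ = Matrix.trace ((Mᵀ * M) * (S * S)) := by rw [Matrix.mul_assoc]
    rw [h1, h2, hXX, Matrix.mul_smul, Matrix.trace_smul, smul_eq_mul]
  -- projections
  have hPSi : (P * S) * (P * S) = P * S := by
    calc (P * S) * (P * S) = (P * S * P) * S := by simp only [Matrix.mul_assoc]
      _ = P * S := by rw [hP2]
  have hSPi : (S * P) * (S * P) = S * P := by
    calc (S * P) * (S * P) = (S * P * S) * P := by simp only [Matrix.mul_assoc]
      _ = S * P := by rw [hP1]
  have hWSPS : (W * S) * (P * S) = W * S := by
    calc (W * S) * (P * S) = W * (S * P * S) := by simp only [Matrix.mul_assoc]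
      _ = W * S := by rw [hP1]
  -- key computation for the objective at T * P
  have hTPX : fsq (T * P * X - W * X) = n * fsq ((T - W * S) * (P * S)) := by
    have h1 : T * P * X - W * X = (T * P - W) * X := by rw [Matrix.sub_mul]
    have h2 : (T * P - W) * S = (T - W * S) * (P * S) := by
      rw [Matrix.sub_mul, Matrix.sub_mul, hWSPS, Matrix.mul_assoc]
    rw [h1, hscale, h2]
  have hDX : ∀ Δ : Matrix (Fin dy) (Fin dx) ℝ, fsq (Δ * X - W * X) = n * fsq (W * S - Δ * S) := by
    intro Δ
    have h1 : Δ * X - W * X = (Δ - W) * X := by rw [Matrix.sub_mul]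
    have h2 : (Δ - W) * S = Δ * S - W * S := by rw [Matrix.sub_mul]
    rw [h1, hscale, h2, fsq_sub_comm]
  -- the main chain of inequalities
  have hchain : ∀ Δ : Matrix (Fin dy) (Fin dx) ℝ, Δ.rank ≤ r →
      fsq (T * P * X - W * X) ≤ n * fsq (W * S - T) ∧
      n * fsq (W * S - T) ≤ fsq (Δ * X - W * X) := by
    intro Δ hΔ
    constructor
    · rw [hTPX]
      have h1 : fsq ((T - W * S) * (P * S)) ≤ fsq (T - W * S) := fsq_mul_le _ hP4 hPSi _
      have h2 : fsq (T - W * S) = fsq (W * S - T) := fsq_sub_comm _ _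
      nlinarith [fsq_nonneg ((T - W * S) * (P * S))]
    · rw [hDX Δ]
      have hrkΔS : (Δ * S).rank ≤ r := le_trans (Matrix.rank_mul_le_left Δ S) hΔ
      have h3 : fsq (W * S - T) ≤ fsq (W * S - Δ * S) :=
        fsq_le_of_frobNorm_le (hT_best (Δ * S) hrkΔS)
      nlinarith
  refine ⟨le_trans (Matrix.rank_mul_le_left T P) hT_rank, ?_, ?_⟩
  · intro Δ hΔ
    obtain ⟨hc1, hc2⟩ := hchain Δ hΔ
    exact frobNorm_le_frobNorm (le_trans hc1 hc2)
  · intro Δ hΔ heq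
    rcases Nat.eq_zero_or_pos r with hr0 | hr0
    · -- r = 0 : T = 0
      have hT0 : T = 0 := eq_zero_of_rank_le_zero T (hr0 ▸ hT_rank)
      have : T * P = 0 := by rw [hT0, Matrix.zero_mul]
      rw [this, frobNorm_eq, frobNorm_eq]
      have := fsq_nonneg Δ
      have h0 : fsq (0 : Matrix (Fin dy) (Fin dx) ℝ) = 0 := by
        simp [fsq]
      rw [h0, Real.sqrt_zero]
      exact Real.sqrt_nonneg _
    · -- r > 0 : use uniqueness of the best approximation
      have hfsq_eq : fsq (Δ * X - W * X) = fsq (T * P * X - W * X) :=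
        le_antisymm (fsq_le_of_frobNorm_le (le_of_eq heq))
          (fsq_le_of_frobNorm_le (le_of_eq heq.symm))
      obtain ⟨hc1, hc2⟩ := hchain Δ hΔ
      -- fsq (W*S - Δ*S) = fsq (W*S - T)
      have hminval : fsq (W * S - Δ * S) = fsq (W * S - T) := by
        have h1 : fsq (Δ * X - W * X) = n * fsq (W * S - Δ * S) := hDX Δ
        have h2 : n * fsq (W * S - Δ * S) ≤ n * fsq (W * S - T) := by
          rw [← h1, hfsq_eq]
          exact le_trans hc1 (le_refl _)
        have hrkΔS : (Δ * S).rank ≤ r := le_trans (Matrix.rank_mul_le_left Δ S) hΔ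
        have h3 : fsq (W * S - T) ≤ fsq (W * S - Δ * S) :=
          fsq_le_of_frobNorm_le (hT_best (Δ * S) hrkΔS)
        have h4 : fsq (W * S - Δ * S) ≤ fsq (W * S - T) :=
          le_of_mul_le_mul_left (by linarith) hnpos
        linarith
      have hrkΔS : (Δ * S).rank ≤ r := le_trans (Matrix.rank_mul_le_left Δ S) hΔ
      have hminT : ∀ C : Matrix (Fin dy) (Fin dx) ℝ, C.rank ≤ r →
          fsq (W * S - T) ≤ fsq (W * S - C) :=
        fun C hC => fsq_le_of_frobNorm_le (hT_best C hC)
      have hminΔS : ∀ C : Matrix (Fin dy) (Fin dx) ℝ, C.rank ≤ r →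
          fsq (W * S - Δ * S) ≤ fsq (W * S - C) :=
        fun C hC => hminval ▸ hminT C hC
      have hrle : r ≤ dx := le_trans hrank (Matrix.rank_le_width (W * S))
      have hTDS : T = Δ * S := by
        rcases lt_or_eq_of_le hrle with hcase | hcase
        · -- r < dx : spectral + gap
          have hGpsd : ((W * S)ᵀ * (W * S)).PosSemidef := by
            have := Matrix.posSemidef_conjTranspose_mul_self (W * S)
            rwa [Matrix.conjTranspose_eq_transpose_of_trivial] at this
          obtain ⟨U, μ, hU1, hU2, hGd, hμa, hμ0⟩ := spectral_sorted _ hGpsd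
          have hr1dx : r - 1 < dx := by omega
          have hl1 : sval (W * S) r ≤ Real.sqrt (μ ⟨r - 1, hr1dx⟩) := by
            have := sval_le_sqrt (W * S) U μ hU1 hU2 hGd hμa hμ0 hr1dx
            have hr' : r - 1 + 1 = r := Nat.succ_pred_eq_of_pos hr0
            rwa [hr'] at this
          have hl2 : Real.sqrt (μ ⟨r, hcase⟩) ≤ sval (W * S) (r + 1) :=
            sqrt_le_sval (W * S) U μ hU2 hGd hμa hμ0 hcase
          have hgapμ : μ ⟨r, hcase⟩ < μ ⟨r - 1, hr1dx⟩ := by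
            by_contra hcon
            push_neg at hcon
            have := Real.sqrt_le_sqrt hcon
            have hch : sval (W * S) r ≤ sval (W * S) (r + 1) :=
              le_trans hl1 (le_trans this hl2)
            linarith
          have hgap' : ∀ k : Fin dx, (k : ℕ) < r → μ ⟨r, hcase⟩ < μ k := by
            intro k hk
            refine lt_of_lt_of_le hgapμ (hμa ?_)
            rw [Fin.le_def]
            simp only
            omega
          have hTeq := best_approx_eq (W * S) U μ hU1 hU2 hGd hμa hμ0 hcase hgap'
            T hT_rank hminT
          have hΔSeq := best_approx_eq (W * S) U μ hU1 hU2 hGd hμa hμ0 hcase hgap'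
            (Δ * S) hrkΔS hminΔS
          rw [hTeq, hΔSeq]
        · -- r = dx : minimum value is 0, so T = W * S = Δ * S
          have hWSrk : (W * S).rank ≤ r := hcase ▸ Matrix.rank_le_width (W * S)
          have h0 : fsq (W * S - W * S) = 0 := by simp [fsq]
          have hT0 : fsq (W * S - T) = 0 :=
            le_antisymm (h0 ▸ hminT (W * S) hWSrk) (fsq_nonneg _)
          have hΔ0 : fsq (W * S - Δ * S) = 0 :=
            le_antisymm (h0 ▸ hminΔS (W * S) hWSrk) (fsq_nonneg _)
          have e1 : W * S - T = 0 := eq_zero_of_fsq_eq_zero hT0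
          have e2 : W * S - Δ * S = 0 := eq_zero_of_fsq_eq_zero hΔ0
          have : T = W * S := by linear_combination (norm := abel) -e1
          rw [this]
          linear_combination (norm := abel) e2
      -- conclude
      have hfinal : T * P = Δ * (S * P) := by
        rw [hTDS, Matrix.mul_assoc]
      rw [hfinal]
      exact frobNorm_le_frobNorm (fsq_mul_le (S * P) hP3 hSPi Δ)
end

section
/- In the underdetermined regime n < d_x with X ∈ ℝ^{d_x×n} of full column rank, noise matrix E with i.i.d. mean-zero columns of covariance Σ_εε independent of X, pre-trained A₀, Δ* = A* − A₀, Y = A*X + E, and FFT solution Â = A₀ + (Y − A₀X)X⁺, the conditional expected excess risk given X equals ‖Σ_xx^{1/2}(I − P_X)Δ*ᵀ‖_F² + (1/n)Tr(Σ_εε)·Tr(Σ_xx Σ̂⁺), where P_X = XX⁺ is the orthogonal projection onto col(X) and Σ̂ = (1/n)XXᵀ. -/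
open Matrix MeasureTheory ProbabilityTheory

lemma frobSq {m n : ℕ} (M : Matrix (Fin m) (Fin n) ℝ) :
    frobNorm M ^ 2 = ∑ i, ∑ j, (M i j) ^ 2 :=
  Real.sq_sqrt (Finset.sum_nonneg fun _ _ => Finset.sum_nonneg fun _ _ => sq_nonneg _)

lemma mp_unique {d : ℕ} {M Q Q' : Matrix (Fin d) (Fin d) ℝ}
    (h1 : M * Q * M = M) (h2 : Q * M * Q = Q) (h3 : (M*Q)ᵀ = M*Q) (h4 : (Q*M)ᵀ = Q*M)
    (h1' : M * Q' * M = M) (h2' : Q' * M * Q' = Q') (h3' : (M*Q')ᵀ = M*Q') (h4' : (Q'*M)ᵀ = Q'*M) :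
    Q = Q' := by
  have hMQ : M * Q = M * Q' := by
    calc M * Q = (M * Q' * M) * Q := by rw [h1']
    _ = (M * Q') * (M * Q) := by noncomm_ring
    _ = (M * Q')ᵀ * (M * Q)ᵀ := by rw [h3', h3]
    _ = ((M * Q) * (M * Q'))ᵀ := (transpose_mul _ _).symm
    _ = ((M * Q * M) * Q')ᵀ := by noncomm_ring
    _ = (M * Q')ᵀ := by rw [h1]
    _ = M * Q' := h3'
  have hQM : Q * M = Q' * M := by
    calc Q * M = Q * (M * Q' * M) := by rw [h1']
    _ = (Q * M) * (Q' * M) := by noncomm_ring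
    _ = (Q * M)ᵀ * (Q' * M)ᵀ := by rw [h4, h4']
    _ = ((Q' * M) * (Q * M))ᵀ := (transpose_mul _ _).symm
    _ = (Q' * (M * Q * M))ᵀ := by noncomm_ring
    _ = (Q' * M)ᵀ := by rw [h1]
    _ = Q' * M := h4'
  calc Q = Q * M * Q := h2.symm
  _ = (Q' * M) * Q := by rw [hQM]
  _ = Q' * (M * Q) := by rw [mul_assoc]
  _ = Q' * (M * Q') := by rw [hMQ]
  _ = Q' * M * Q' := (mul_assoc _ _ _).symm
  _ = Q' := h2'

lemma gram_isUnit {dx n : ℕ} (X : Matrix (Fin dx) (Fin n) ℝ) (hX : X.rank = n) :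
    IsUnit (Xᵀ * X) := by
  have hr : (Xᵀ * X).rank = n := by rw [X.rank_transpose_mul_self, hX]
  rw [← Matrix.mulVec_surjective_iff_isUnit]
  have : LinearMap.range (Xᵀ * X).mulVecLin = ⊤ := by
    apply Submodule.eq_top_of_finrank_eq
    simpa [Matrix.rank] using hr
  intro v
  obtain ⟨a, ha⟩ := LinearMap.range_eq_top.mp this v
  exact ⟨a, by rwa [Matrix.mulVecLin_apply] at ha⟩

/-- Exact conditional (given `X`) expected excess risk of FFT in the underdetermined
regime `n < d_x`: with `X` a fixed full-column-rank matrix, noise `E` with i.i.d.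
mean-zero columns of covariance `Σ_εε`, `Y = A*X + E`, `Â = A₀ + (Y − A₀X)X⁺`,
`Δ* = A* − A₀`, `P_X = XX⁺`, `Σ̂ = (1/n)XXᵀ` with Moore–Penrose pseudoinverse `Q`,
the expected excess risk equals
`‖Σ_xx^{1/2}(I − P_X)Δ*ᵀ‖_F² + (1/n)Tr(Σ_εε)·Tr(Σ_xx Σ̂⁺)`. -/
theorem fft_excess_risk_underdetermined {dy dx n : ℕ} (hn : n < dx) (hn0 : 0 < n)
    {Ω : Type*} [MeasurableSpace Ω] (μ : Measure Ω) [IsProbabilityMeasure μ]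
    (X : Matrix (Fin dx) (Fin n) ℝ) (hX : X.rank = n)
    (Sxx Sx : Matrix (Fin dx) (Fin dx) ℝ)
    (hSxx : Sxx.PosDef) (hSx : Sx.PosSemidef) (hSx2 : Sx * Sx = Sxx)
    (See : Matrix (Fin dy) (Fin dy) ℝ)
    (Em : Ω → Matrix (Fin dy) (Fin n) ℝ)
    (hIndep : iIndepFun
      (fun j ω => fun i => Em ω i j) μ)
    (hident : ∀ j j' : Fin n,
      Measure.map (fun ω => fun i => Em ω i j) μ
        = Measure.map (fun ω => fun i => Em ω i j') μ)
    (hmean : ∀ i j, ∫ ω, Em ω i j ∂μ = 0)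
    (hcov : ∀ j i i', ∫ ω, Em ω i j * Em ω i' j ∂μ = See i i')
    (hint : ∀ i j, Integrable (fun ω => Em ω i j) μ)
    (hint2 : ∀ i j i' j', Integrable (fun ω => Em ω i j * Em ω i' j') μ)
    (A₀ Astar : Matrix (Fin dy) (Fin dx) ℝ)
    -- `Q` is the Moore–Penrose pseudoinverse of `Σ̂ = (1/n)XXᵀ`
    (Q : Matrix (Fin dx) (Fin dx) ℝ)
    (hQ1 : ((n : ℝ)⁻¹ • (X * Xᵀ)) * Q * ((n : ℝ)⁻¹ • (X * Xᵀ)) = (n : ℝ)⁻¹ • (X * Xᵀ))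
    (hQ2 : Q * ((n : ℝ)⁻¹ • (X * Xᵀ)) * Q = Q)
    (hQ3 : (((n : ℝ)⁻¹ • (X * Xᵀ)) * Q)ᵀ = ((n : ℝ)⁻¹ • (X * Xᵀ)) * Q)
    (hQ4 : (Q * ((n : ℝ)⁻¹ • (X * Xᵀ)))ᵀ = Q * ((n : ℝ)⁻¹ • (X * Xᵀ)))
    (Y : Ω → Matrix (Fin dy) (Fin n) ℝ)
    (hY : ∀ ω, Y ω = Astar * X + Em ω)
    (Ahat : Ω → Matrix (Fin dy) (Fin dx) ℝ)
    (hAhat : ∀ ω, Ahat ω = A₀ + (Y ω - A₀ * X) * ((Xᵀ * X)⁻¹ * Xᵀ)) :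
    ∫ ω, frobNorm ((Ahat ω - Astar) * Sx) ^ 2 ∂μ
      = frobNorm (Sx * (1 - X * ((Xᵀ * X)⁻¹ * Xᵀ)) * (Astar - A₀)ᵀ) ^ 2
        + (n : ℝ)⁻¹ * See.trace * (Sxx * Q).trace := by
  classical
  have hnR : (n : ℝ) ≠ 0 := Nat.cast_ne_zero.mpr hn0.ne'
  set G : Matrix (Fin n) (Fin n) ℝ := Xᵀ * X with hGdef
  have hGu : IsUnit G := gram_isUnit X hX
  have hGdet : IsUnit G.det := (Matrix.isUnit_iff_isUnit_det G).mp hGu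
  have hG1 : G * G⁻¹ = 1 := Matrix.mul_nonsing_inv G hGdet
  have hG2 : G⁻¹ * G = 1 := Matrix.nonsing_inv_mul G hGdet
  have hGsym : Gᵀ = G := by rw [hGdef, transpose_mul, transpose_transpose]
  have hGinvsym : (G⁻¹)ᵀ = G⁻¹ := by rw [Matrix.transpose_nonsing_inv, hGsym]
  have hSxsym : Sxᵀ = Sx := by
    have h := hSx.1
    ext i j
    have h2 := congrFun (congrFun h i) j
    simpa [Matrix.conjTranspose_apply] using h2
  -- cancellation helpers
  have c1 : ∀ {m : ℕ} (t : Matrix (Fin n) (Fin m) ℝ), G * (G⁻¹ * t) = t := by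
    intro m t; rw [← Matrix.mul_assoc, hG1, Matrix.one_mul]
  have c2 : ∀ {m : ℕ} (t : Matrix (Fin n) (Fin m) ℝ), G⁻¹ * (G * t) = t := by
    intro m t; rw [← Matrix.mul_assoc, hG2, Matrix.one_mul]
  have c3 : ∀ {m : ℕ} (t : Matrix (Fin n) (Fin m) ℝ), Xᵀ * (X * t) = G * t := by
    intro m t; rw [← Matrix.mul_assoc, ← hGdef]
  set Xp : Matrix (Fin n) (Fin dx) ℝ := G⁻¹ * Xᵀ with hXpdef
  set P : Matrix (Fin dx) (Fin dx) ℝ := X * Xp with hPdef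
  have hXpT : Xpᵀ = X * G⁻¹ := by
    rw [hXpdef, transpose_mul, transpose_transpose, hGinvsym]
  have hPsym : Pᵀ = P := by
    rw [hPdef, transpose_mul, hXpT, Matrix.mul_assoc, ← hXpdef]
  set C : Matrix (Fin dy) (Fin dx) ℝ := (A₀ - Astar) * ((1 - P) * Sx) with hCdef
  set B : Matrix (Fin n) (Fin dx) ℝ := Xp * Sx with hBdef
  -- the key decomposition
  have hKey : ∀ ω, (Ahat ω - Astar) * Sx = C + Em ω * B := by
    intro ω
    rw [hAhat ω, hY ω, hCdef, hBdef, hPdef, hXpdef]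
    simp only [Matrix.add_mul, Matrix.sub_mul, Matrix.mul_sub, Matrix.mul_add,
      Matrix.mul_one, Matrix.one_mul, Matrix.mul_assoc]
    abel
  -- second moments of the noise
  have key_cov : ∀ (i i' : Fin dy) (k k' : Fin n),
      ∫ ω, Em ω i k * Em ω i' k' ∂μ = if k = k' then See i i' else 0 := by
    intro i i' k k'
    by_cases h : k = k'
    · subst h; simp [hcov k i i']
    · have hind : IndepFun (fun ω => Em ω i k) (fun ω => Em ω i' k') μ :=
        (hIndep.indepFun h).comp (measurable_pi_apply i) (measurable_pi_apply i')
      have hm := hind.integral_mul_eq_mul_integral (hint i k).1 (hint i' k').1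
      rw [if_neg h]
      calc ∫ ω, Em ω i k * Em ω i' k' ∂μ
          = (∫ ω, Em ω i k ∂μ) * ∫ ω, Em ω i' k' ∂μ := hm
        _ = 0 := by rw [hmean, hmean, mul_zero]
  -- pointwise expansion of the square
  have hexp : ∀ (i : Fin dy) (j : Fin dx) (ω : Ω),
      (C i j + ∑ k, Em ω i k * B k j) ^ 2
      = C i j ^ 2 + (∑ k, (2 * C i j * B k j) * Em ω i k)
        + ∑ k, ∑ k', (B k j * B k' j) * (Em ω i k * Em ω i k') := by
    intro i j ω
    rw [add_sq]
    congr 1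
    · congr 1
      rw [Finset.mul_sum]
      exact Finset.sum_congr rfl fun k _ => by ring
    · rw [sq, Finset.sum_mul_sum]
      exact Finset.sum_congr rfl fun k _ => Finset.sum_congr rfl fun k' _ => by ring
  have hIntL : ∀ (i : Fin dy) (j : Fin dx),
      Integrable (fun ω => ∑ k, (2 * C i j * B k j) * Em ω i k) μ := fun i j =>
    integrable_finset_sum _ fun k _ => (hint i k).const_mul _
  have hIntQ : ∀ (i : Fin dy) (j : Fin dx),
      Integrable (fun ω => ∑ k, ∑ k', (B k j * B k' j) * (Em ω i k * Em ω i k')) μ := fun i j =>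
    integrable_finset_sum _ fun k _ =>
      integrable_finset_sum _ fun k' _ => (hint2 i k i k').const_mul _
  have hgInt : ∀ (i : Fin dy) (j : Fin dx),
      Integrable (fun ω => (C i j + ∑ k, Em ω i k * B k j) ^ 2) μ := by
    intro i j
    have e : (fun ω => (C i j + ∑ k, Em ω i k * B k j) ^ 2)
        = fun ω => C i j ^ 2 + (∑ k, (2 * C i j * B k j) * Em ω i k)
          + ∑ k, ∑ k', (B k j * B k' j) * (Em ω i k * Em ω i k') := funext (hexp i j)
    rw [e]
    exact ((integrable_const _).add (hIntL i j)).add (hIntQ i j)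
  have hgVal : ∀ (i : Fin dy) (j : Fin dx),
      ∫ ω, (C i j + ∑ k, Em ω i k * B k j) ^ 2 ∂μ
        = C i j ^ 2 + (∑ k, B k j ^ 2) * See i i := by
    intro i j
    have hCL : Integrable (fun ω => C i j ^ 2 + ∑ k, (2 * C i j * B k j) * Em ω i k) μ :=
      (integrable_const _).add (hIntL i j)
    have hz : (∑ k, ∫ ω, (2 * C i j * B k j) * Em ω i k ∂μ) = 0 := by
      simp [integral_const_mul, hmean]
    have hq : (∑ k, ∫ ω, ∑ k', (B k j * B k' j) * (Em ω i k * Em ω i k') ∂μ)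
        = (∑ k, B k j ^ 2) * See i i := by
      have hptw : ∀ k : Fin n, (∫ ω, ∑ k', (B k j * B k' j) * (Em ω i k * Em ω i k') ∂μ)
          = B k j ^ 2 * See i i := by
        intro k
        rw [integral_finset_sum _ (fun k' _ => (hint2 i k i k').const_mul _)]
        simp only [integral_const_mul, key_cov i i, mul_ite, mul_zero]
        simp [sq]
      simp only [hptw]
      rw [Finset.sum_mul]
    calc ∫ ω, (C i j + ∑ k, Em ω i k * B k j) ^ 2 ∂μ
        = ∫ ω, (C i j ^ 2 + (∑ k, (2 * C i j * B k j) * Em ω i k)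
            + ∑ k, ∑ k', (B k j * B k' j) * (Em ω i k * Em ω i k')) ∂μ := by
          simp only [hexp i j]
      _ = (∫ ω, (C i j ^ 2 + ∑ k, (2 * C i j * B k j) * Em ω i k) ∂μ)
            + ∫ ω, ∑ k, ∑ k', (B k j * B k' j) * (Em ω i k * Em ω i k') ∂μ :=
          integral_add hCL (hIntQ i j)
      _ = ((∫ _ω, (C i j ^ 2 : ℝ) ∂μ) + ∫ ω, ∑ k, (2 * C i j * B k j) * Em ω i k ∂μ)
            + ∫ ω, ∑ k, ∑ k', (B k j * B k' j) * (Em ω i k * Em ω i k') ∂μ := by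
          rw [integral_add (integrable_const _) (hIntL i j)]
      _ = (C i j ^ 2 + ∑ k, ∫ ω, (2 * C i j * B k j) * Em ω i k ∂μ)
            + ∑ k, ∫ ω, ∑ k', (B k j * B k' j) * (Em ω i k * Em ω i k') ∂μ := by
          rw [integral_const, integral_finset_sum _ (fun k _ => (hint i k).const_mul _),
            integral_finset_sum _ (fun k _ =>
              integrable_finset_sum _ fun k' _ => (hint2 i k i k').const_mul _)]
          simp
      _ = C i j ^ 2 + (∑ k, B k j ^ 2) * See i i := by rw [hz, hq]; simp
  -- assemble the integral
  have hfrob : ∀ ω, frobNorm ((Ahat ω - Astar) * Sx) ^ 2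
      = ∑ i, ∑ j, (C i j + ∑ k, Em ω i k * B k j) ^ 2 := by
    intro ω
    rw [frobSq, hKey ω]
    exact Finset.sum_congr rfl fun i _ => Finset.sum_congr rfl fun j _ => by
      rw [Matrix.add_apply, Matrix.mul_apply]
  have hL : ∫ ω, frobNorm ((Ahat ω - Astar) * Sx) ^ 2 ∂μ
      = (∑ i, ∑ j, C i j ^ 2) + (∑ i, See i i) * (∑ j : Fin dx, ∑ k : Fin n, B k j ^ 2) := by
    calc ∫ ω, frobNorm ((Ahat ω - Astar) * Sx) ^ 2 ∂μ
        = ∫ ω, ∑ i, ∑ j, (C i j + ∑ k, Em ω i k * B k j) ^ 2 ∂μ :=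
          integral_congr_ae (Filter.Eventually.of_forall fun ω => hfrob ω)
      _ = ∑ i, ∑ j, ∫ ω, (C i j + ∑ k, Em ω i k * B k j) ^ 2 ∂μ := by
          rw [integral_finset_sum _ fun i _ => integrable_finset_sum _ fun j _ => hgInt i j]
          exact Finset.sum_congr rfl fun i _ => integral_finset_sum _ fun j _ => hgInt i j
      _ = ∑ i, ∑ j, (C i j ^ 2 + (∑ k, B k j ^ 2) * See i i) :=
          Finset.sum_congr rfl fun i _ => Finset.sum_congr rfl fun j _ => hgVal i j
      _ = (∑ i, ∑ j, C i j ^ 2) + (∑ i, See i i) * (∑ j : Fin dx, ∑ k : Fin n, B k j ^ 2) := by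
          rw [Finset.sum_mul_sum, ← Finset.sum_add_distrib]
          refine Finset.sum_congr rfl fun i _ => ?_
          rw [← Finset.sum_add_distrib]
          exact Finset.sum_congr rfl fun j _ => by ring
  -- first term
  have hterm1 : (∑ i, ∑ j, C i j ^ 2) = frobNorm (Sx * (1 - P) * (Astar - A₀)ᵀ) ^ 2 := by
    have hmat : Sx * (1 - P) * (Astar - A₀)ᵀ = - Cᵀ := by
      rw [hCdef]
      simp only [transpose_mul, transpose_sub, transpose_one, hPsym, hSxsym]
      rw [← Matrix.mul_neg, neg_sub]
    rw [frobSq]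
    have h2 : ∀ (i : Fin dx) (j : Fin dy),
        ((Sx * (1 - P) * (Astar - A₀)ᵀ : Matrix (Fin dx) (Fin dy) ℝ)) i j ^ 2 = C j i ^ 2 := by
      intro i j
      rw [hmat]
      simp [Matrix.neg_apply, Matrix.transpose_apply, neg_sq]
    simp only [h2]
    exact Finset.sum_comm
  -- second term
  set N : Matrix (Fin dx) (Fin dx) ℝ := (X * G⁻¹) * (G⁻¹ * Xᵀ) with hNdef
  have w1 : (X * Xᵀ) * N = P := by
    rw [hNdef, hPdef, hXpdef]
    simp only [Matrix.mul_assoc]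
    rw [c3, c1]
  have w2 : N * (X * Xᵀ) = P := by
    rw [hNdef, hPdef, hXpdef]
    simp only [Matrix.mul_assoc]
    rw [c3, c2]
  have w3 : P * (X * Xᵀ) = X * Xᵀ := by
    rw [hPdef, hXpdef]
    simp only [Matrix.mul_assoc]
    rw [c3, c2]
  have w5 : P * N = N := by
    rw [hPdef, hXpdef, hNdef]
    simp only [Matrix.mul_assoc]
    rw [c3, c2]
  have hMQ' : ((n : ℝ)⁻¹ • (X * Xᵀ)) * ((n : ℝ) • N) = P := by
    rw [Matrix.smul_mul, Matrix.mul_smul, smul_smul, inv_mul_cancel₀ hnR, one_smul, w1]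
  have hQ'M : ((n : ℝ) • N) * ((n : ℝ)⁻¹ • (X * Xᵀ)) = P := by
    rw [Matrix.smul_mul, Matrix.mul_smul, smul_smul, mul_inv_cancel₀ hnR, one_smul, w2]
  have p1' : ((n : ℝ)⁻¹ • (X * Xᵀ)) * ((n : ℝ) • N) * ((n : ℝ)⁻¹ • (X * Xᵀ))
      = (n : ℝ)⁻¹ • (X * Xᵀ) := by rw [hMQ', Matrix.mul_smul, w3]
  have p2' : ((n : ℝ) • N) * ((n : ℝ)⁻¹ • (X * Xᵀ)) * ((n : ℝ) • N) = (n : ℝ) • N := by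
    rw [hQ'M, Matrix.mul_smul, w5]
  have p3' : (((n : ℝ)⁻¹ • (X * Xᵀ)) * ((n : ℝ) • N))ᵀ = ((n : ℝ)⁻¹ • (X * Xᵀ)) * ((n : ℝ) • N) := by
    rw [hMQ']; exact hPsym
  have p4' : (((n : ℝ) • N) * ((n : ℝ)⁻¹ • (X * Xᵀ)))ᵀ = ((n : ℝ) • N) * ((n : ℝ)⁻¹ • (X * Xᵀ)) := by
    rw [hQ'M]; exact hPsym
  have hQN : Q = (n : ℝ) • N := mp_unique hQ1 hQ2 hQ3 hQ4 p1' p2' p3' p4'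
  have htrace : (Sxx * Q).trace = (n : ℝ) * (Sxx * N).trace := by
    rw [hQN, Matrix.mul_smul, Matrix.trace_smul, smul_eq_mul]
  have hBsum : (∑ j : Fin dx, ∑ k : Fin n, B k j ^ 2) = (Sxx * N).trace := by
    have h1 : (∑ j : Fin dx, ∑ k : Fin n, B k j ^ 2) = (Bᵀ * B).trace := by
      simp [Matrix.trace, Matrix.diag, Matrix.mul_apply, pow_two, Matrix.transpose_apply]
    have hBt : Bᵀ * B = Sx * N * Sx := by
      rw [hBdef, transpose_mul, hXpT, hXpdef, hSxsym, hNdef]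
      simp only [Matrix.mul_assoc]
    rw [h1, hBt, Matrix.trace_mul_comm, ← Matrix.mul_assoc, hSx2]
  have hSt : See.trace = ∑ i, See i i := rfl
  rw [hL, hterm1, hBsum]
  congr 1
  rw [htrace, hSt]
  field_simp
end
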